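/- arXiv:2203.12398 — 5 statements merged into one kernel-verified Lean document; each statement's English description precedes it below -/
import Mathlib

section
/- For every γ ∈ (0, 2) and every real number x ≠ 0, one has ∫₀^∞ θ₁(γ²/8, (γ²/4)iτ) · e^{−πγ²x²τ/4} dτ = 4 sinh(γ²πx/4) / (γ² x cosh(πx)). -/
open Real MeasureTheory


/-- The Jacobi theta function `θ₁(x, it)` for `x ∈ ℝ` and `t > 0`, defined by the
real series `θ₁(x, it) = 2 e^{−πt/4} Σ_{n=0}^∞ (−1)^n e^{−n(n+1)πt} sin((2n+1)πx)`. -/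
noncomputable def theta1 (x t : ℝ) : ℝ :=
  2 * Real.exp (-(π * t) / 4) *
    ∑' n : ℕ, (-1 : ℝ) ^ n * Real.exp (-((n : ℝ) * ((n : ℝ) + 1)) * π * t) *
      Real.sin ((2 * (n : ℝ) + 1) * π * x)


noncomputable def Ffun (x : ℝ) : ℝ → ℂ := fun u => Complex.exp (-(Complex.I * u) / 2) * Complex.sinh (x * u)

lemma exp_neg_half_int (n : ℤ) :
    Complex.exp (-(Complex.I * ((n : ℂ) + 1/2)) * (π : ℂ)) = (-1 : ℂ) ^ n * (-Complex.I) := by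
  have h : -(Complex.I * ((n : ℂ) + 1/2)) * (π : ℂ)
      = (n : ℤ) * (-((π:ℂ) * Complex.I)) + (-(π/2 : ℝ) : ℂ) * Complex.I := by
    push_cast; ring
  rw [h, Complex.exp_add, Complex.exp_int_mul, Complex.exp_mul_I]
  have h1 : Complex.exp (-((π:ℂ) * Complex.I)) = -1 := by
    rw [show -((π:ℂ) * Complex.I) = (-π : ℝ) * Complex.I by push_cast; ring, Complex.exp_mul_I]
    simp [← Complex.ofReal_cos, ← Complex.ofReal_sin]
  rw [h1]
  congr 1
  rw [show (-(↑(π/2):ℂ)) = ((-(π/2) : ℝ) : ℂ) by push_cast; ring,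
    ← Complex.ofReal_cos, ← Complex.ofReal_sin]
  norm_num [Real.cos_pi_div_two, Real.sin_pi_div_two]

lemma hasDerivAt_G (x : ℝ) (b : ℂ) (d : ℂ) (hd : d ≠ 0) (hbd : (x:ℂ)^2 + b^2 = d) (u : ℝ) :
    HasDerivAt (fun u : ℝ => Complex.exp (-(Complex.I * b) * u) *
        ((x:ℂ) * Complex.cosh (x * u) + Complex.I * b * Complex.sinh (x * u)) / d)
      (Complex.exp (-(Complex.I * b) * u) * Complex.sinh ((x:ℂ) * u)) u := by
  have hE : ∀ w : ℂ, HasDerivAt (fun w : ℂ => Complex.exp (-(Complex.I * b) * w) *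
        ((x:ℂ) * Complex.cosh ((x:ℂ) * w) + Complex.I * b * Complex.sinh ((x:ℂ) * w)) / d)
      (Complex.exp (-(Complex.I * b) * w) * Complex.sinh ((x:ℂ) * w)) w := by
    intro w
    have h1 : HasDerivAt (fun w : ℂ => Complex.exp (-(Complex.I * b) * w))
        (Complex.exp (-(Complex.I * b) * w) * (-(Complex.I * b))) w := by
      simpa using ((hasDerivAt_id w).const_mul (-(Complex.I * b))).cexp
    have h2 : HasDerivAt (fun w : ℂ => Complex.cosh ((x:ℂ) * w))
        (Complex.sinh ((x:ℂ) * w) * (x:ℂ)) w := by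
      have h := (Complex.hasDerivAt_cosh ((x:ℂ) * w)).comp w ((hasDerivAt_id w).const_mul (x:ℂ))
      simp only [id_eq, mul_one] at h
      exact h
    have h3 : HasDerivAt (fun w : ℂ => Complex.sinh ((x:ℂ) * w))
        (Complex.cosh ((x:ℂ) * w) * (x:ℂ)) w := by
      have h := (Complex.hasDerivAt_sinh ((x:ℂ) * w)).comp w ((hasDerivAt_id w).const_mul (x:ℂ))
      simp only [id_eq, mul_one] at h
      exact h
    have h4 := ((h1.mul (((h2.const_mul (x:ℂ))).add ((h3.const_mul (Complex.I * b))))).div_const d)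
    refine h4.congr_deriv (Eq.symm ?_)
    simp only [Pi.add_apply]
    rw [eq_div_iff hd]
    have hI : Complex.I ^ 2 = -1 := Complex.I_sq
    linear_combination (Complex.exp (-(Complex.I * b) * w) * Complex.sinh ((x:ℂ)*w) * b^2) * hI -
      (Complex.exp (-(Complex.I * b) * w) * Complex.sinh ((x:ℂ)*w)) * hbd
  exact (hE u).comp_ofReal

lemma exp_pos_half_int (n : ℤ) :
    Complex.exp ((Complex.I * ((n : ℂ) + 1/2)) * (π : ℂ)) = (-1 : ℂ) ^ n * Complex.I := by
  have h : (Complex.I * ((n : ℂ) + 1/2)) * (π : ℂ)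
      = (n : ℤ) * ((π:ℂ) * Complex.I) + ((π/2 : ℝ) : ℂ) * Complex.I := by
    push_cast; ring
  rw [h, Complex.exp_add, Complex.exp_int_mul, Complex.exp_pi_mul_I, Complex.exp_mul_I]
  congr 1
  rw [← Complex.ofReal_cos, ← Complex.ofReal_sin]
  norm_num [Real.cos_pi_div_two, Real.sin_pi_div_two]

lemma key_integral (x : ℝ) (n : ℤ) :
    (∫ u in (-π:ℝ)..π, Complex.exp (-(Complex.I * ((n:ℂ)+1/2)) * u) * Complex.sinh ((x:ℂ) * u))
      = (-1:ℂ)^n * (-2 * Complex.I) * (x:ℂ) * Complex.cosh ((x:ℂ)*(π:ℂ)) /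
          ((x:ℂ)^2 + ((n:ℂ)+1/2)^2) := by
  set b : ℂ := (n:ℂ) + 1/2 with hb
  set d : ℂ := (x:ℂ)^2 + b^2 with hd'
  have hdr : d = ((x^2 + ((n:ℝ)+1/2)^2 : ℝ) : ℂ) := by rw [hd', hb]; push_cast; ring
  have hne : ((n:ℝ)+1/2) ≠ 0 := by
    intro h
    have h2 : (2*(n:ℝ)+1) = 0 := by linarith
    have h3 : ((2*n+1 : ℤ) : ℝ) = 0 := by push_cast; linarith
    have h4 : (2*n+1 : ℤ) = 0 := by exact_mod_cast h3
    omega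
  have hpos : (0:ℝ) < x^2 + ((n:ℝ)+1/2)^2 := by
    have h1 : 0 < ((n:ℝ)+1/2)^2 := pow_two_pos_of_ne_zero hne
    nlinarith [sq_nonneg x]
  have hd : d ≠ 0 := by
    rw [hdr]
    exact Complex.ofReal_ne_zero.mpr (ne_of_gt hpos)
  have hint := intervalIntegral.integral_eq_sub_of_hasDerivAt (a := (-π:ℝ)) (b := π)
    (f := fun u : ℝ => Complex.exp (-(Complex.I * b) * u) *
        ((x:ℂ) * Complex.cosh (x * u) + Complex.I * b * Complex.sinh (x * u)) / d)
    (fun u _ => hasDerivAt_G x b d hd rfl u)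
    (Continuous.intervalIntegrable (by fun_prop) _ _)
  rw [hint]
  beta_reduce
  have e1 : Complex.exp (-(Complex.I * b) * ((π:ℝ):ℂ)) = (-1:ℂ)^n * (-Complex.I) := by
    rw [hb]; exact_mod_cast exp_neg_half_int n
  have e2 : Complex.exp (-(Complex.I * b) * (((-π):ℝ):ℂ)) = (-1:ℂ)^n * Complex.I := by
    rw [hb, show ((((-π):ℝ)):ℂ) = -(π:ℂ) by push_cast; ring, show -(Complex.I * ((n:ℂ)+1/2)) * -(π:ℂ)
      = (Complex.I * ((n:ℂ)+1/2)) * (π:ℂ) by ring]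
    exact exp_pos_half_int n
  rw [e1, e2, show ((x:ℂ) * (((-π):ℝ):ℂ)) = -((x:ℂ)*(π:ℂ)) by push_cast; ring,
    Complex.cosh_neg, Complex.sinh_neg]
  rw [div_sub_div_same, div_eq_div_iff hd hd]
  ring

lemma fourierCoeffOn_Ffun (x : ℝ) (n : ℤ) (hab : (-π:ℝ) < -π + 2*π) :
    fourierCoeffOn hab (Ffun x) n
      = (-1:ℂ)^n * (-Complex.I) *
          ((x * Real.cosh (π*x) / (π * (x^2 + ((n:ℝ)+1/2)^2)) : ℝ) : ℂ) := by
  rw [fourierCoeffOn_eq_integral]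
  have hptwise : ∀ u : ℝ, (fourier (-n) (u : AddCircle ((-π + 2*π) - (-π)))) • Ffun x u
      = Complex.exp (-(Complex.I * ((n:ℂ)+1/2)) * u) * Complex.sinh ((x:ℂ) * u) := by
    intro u
    rw [fourier_coe_apply, smul_eq_mul, Ffun, ← mul_assoc, ← Complex.exp_add]
    congr 2
    have hπ : ((π:ℝ):ℂ) ≠ 0 := Complex.ofReal_ne_zero.mpr pi_ne_zero
    push_cast
    field_simp
    ring
  simp only [hptwise]
  rw [show ((-π:ℝ) + 2*π) = π by ring, key_integral x n]
  have h2π : ((-π:ℝ) + 2*π) - (-π) = 2*π := by ring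
  rw [show (π:ℝ) - (-π) = 2*π by ring]
  rw [Complex.real_smul]
  have hC : Complex.cosh ((x:ℂ)*(π:ℂ)) = ((Real.cosh (π*x) : ℝ) : ℂ) := by
    rw [Complex.ofReal_cosh]
    push_cast
    ring_nf
  rw [hC]
  have hd : ((x:ℂ)^2 + ((n:ℂ)+1/2)^2) = ((x^2 + ((n:ℝ)+1/2)^2 : ℝ) : ℂ) := by push_cast; ring
  rw [hd]
  have hπ : ((π:ℝ):ℂ) ≠ 0 := Complex.ofReal_ne_zero.mpr pi_ne_zero
  have hne : ((n:ℝ)+1/2) ≠ 0 := by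
    intro h
    have h3 : ((2*n+1 : ℤ) : ℝ) = 0 := by push_cast; linarith
    have h4 : (2*n+1 : ℤ) = 0 := by exact_mod_cast h3
    omega
  have hdd : ((x^2 + ((n:ℝ)+1/2)^2 : ℝ) : ℂ) ≠ 0 := by
    apply Complex.ofReal_ne_zero.mpr
    have h1 : 0 < ((n:ℝ)+1/2)^2 := pow_two_pos_of_ne_zero hne
    nlinarith [sq_nonneg x]
  rw [show ((x * Real.cosh (π*x) / (π * (x^2 + ((n:ℝ)+1/2)^2)) : ℝ) : ℂ)
      = ((x:ℝ):ℂ) * ((Real.cosh (π*x) : ℝ):ℂ) / (((π:ℝ):ℂ) * ((x^2 + ((n:ℝ)+1/2)^2 : ℝ):ℂ))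
      by push_cast; ring]
  rw [show ((1/(2*π) : ℝ) : ℂ) = 1/(2*((π:ℝ):ℂ)) by push_cast; ring]
  field_simp

noncomputable def qfun (x : ℝ) (n : ℤ) : ℝ :=
  x * Real.cosh (π*x) / (π * (x^2 + ((n:ℝ)+1/2)^2))

noncomputable def cfun (x : ℝ) (n : ℤ) : ℂ := (-1:ℂ)^n * (-Complex.I) * ((qfun x n : ℝ) : ℂ)

lemma qfun_neg (x : ℝ) (k : ℕ) : qfun x (-((k:ℤ)+1)) = qfun x k := by
  unfold qfun
  have h : (((-((k:ℤ)+1)):ℤ):ℝ)+1/2 = -(((k:ℤ):ℝ)+1/2) := by push_cast; ring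
  rw [h]
  push_cast
  ring_nf

lemma summable_base : Summable (fun k : ℕ => ((k:ℝ)+1/2)⁻¹ ^ 2) := by
    have h0 : Summable (fun k : ℕ => 1/((k:ℝ))^2) :=
      (Real.summable_one_div_nat_pow (p := 2)).mpr one_lt_two
    have h1 : Summable (fun k : ℕ => 1/(((k:ℝ)+1))^2) := by
      have := (summable_nat_add_iff (f := fun k : ℕ => 1/((k:ℝ))^2) 1).mpr h0
      convert this using 2 with k
      · rfl
      push_cast
      ring
    have h2 : Summable (fun k : ℕ => (4:ℝ) * (1/((k:ℝ)+1)^2)) := h1.mul_left _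
    apply Summable.of_nonneg_of_le (fun k => by positivity) _ h2
    intro k
    rw [inv_pow, ← one_div, show (4:ℝ)*(1/((k:ℝ)+1)^2) = 4/((k:ℝ)+1)^2 by ring,
      div_le_div_iff₀ (by positivity) (by positivity)]
    nlinarith [sq_nonneg ((k:ℝ)), (by positivity : (0:ℝ) ≤ (k:ℝ))]

lemma summable_qfun (x : ℝ) : Summable (fun n : ℤ => |qfun x n|) := by
  have base := summable_base
  have hB : ∀ n : ℤ, |qfun x n| ≤ (|x| * Real.cosh (π*x) / π) * (((n:ℝ)+1/2)⁻¹^2) := by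
    intro n
    have hne : ((n:ℝ)+1/2) ≠ 0 := by
      intro h
      have h3 : ((2*n+1 : ℤ) : ℝ) = 0 := by push_cast; linarith
      have h4 : (2*n+1 : ℤ) = 0 := by exact_mod_cast h3
      omega
    have hsq : 0 < ((n:ℝ)+1/2)^2 := pow_two_pos_of_ne_zero hne
    have hD : 0 < x^2 + ((n:ℝ)+1/2)^2 := by nlinarith [sq_nonneg x]
    have hcosh : 0 < Real.cosh (π*x) := Real.cosh_pos _
    rw [qfun, abs_div, abs_mul, abs_of_pos (by positivity : (0:ℝ) < π * (x^2 + ((n:ℝ)+1/2)^2)),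
      abs_of_pos hcosh]
    rw [inv_pow, ← one_div, mul_one_div, div_div]
    apply div_le_div_of_nonneg_left (by positivity) (by positivity)
    nlinarith [sq_nonneg x, pi_pos]
  apply Summable.of_nonneg_of_le (fun n => abs_nonneg _) hB
  apply Summable.mul_left
  apply Summable.of_nat_of_neg_add_one
  · exact_mod_cast base
  · convert base using 2 with k
    · rfl
    have h : ((-((k:ℤ)+1) : ℤ):ℝ)+1/2 = -(((k:ℝ))+1/2) := by push_cast; ring
    push_cast at h ⊢
    rw [h, inv_neg]
    ring

lemma hasSum_sinh_series (x a : ℝ) (ha0 : 0 < a) (ha1 : a < π/2) :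
    HasSum (fun k : ℕ => 2 * (-1:ℝ)^k * Real.sin ((2*(k:ℝ)+1)*a) * qfun x k)
      (Real.sinh (2*a*x)) := by
  haveI : Fact (0 < 2*π) := ⟨by positivity⟩
  have hcontF : Continuous (Ffun x) := by unfold Ffun; fun_prop
  have hend : Ffun x (-π) = Ffun x (-π + 2*π) := by
    rw [show (-π) + 2*π = π by ring]
    unfold Ffun
    have l1 : Complex.exp (-(Complex.I * (((-π):ℝ):ℂ))/2) = Complex.I := by
      rw [show -(Complex.I * (((-π):ℝ):ℂ))/2 = ((π/2:ℝ):ℂ) * Complex.I by push_cast; ring,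
        Complex.exp_mul_I, ← Complex.ofReal_cos, ← Complex.ofReal_sin]
      norm_num [Real.cos_pi_div_two, Real.sin_pi_div_two]
    have l2 : Complex.exp (-(Complex.I * ((π:ℝ):ℂ))/2) = -Complex.I := by
      rw [show -(Complex.I * ((π:ℝ):ℂ))/2 = ((-(π/2):ℝ):ℂ) * Complex.I by push_cast; ring,
        Complex.exp_mul_I, ← Complex.ofReal_cos, ← Complex.ofReal_sin]
      norm_num [Real.cos_pi_div_two, Real.sin_pi_div_two]
    rw [l1, l2, show ((x:ℂ) * (((-π):ℝ):ℂ)) = -((x:ℂ)*((π:ℝ):ℂ)) by push_cast; ring,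
      Complex.sinh_neg]
    ring
  have cont : Continuous (AddCircle.liftIco (2*π) (-π) (Ffun x)) :=
    AddCircle.liftIco_continuous hend hcontF.continuousOn
  set f : C(AddCircle (2*π), ℂ) := ⟨_, cont⟩ with hf
  have hcoeff : ∀ n : ℤ, fourierCoeff (⇑f) n = cfun x n := by
    intro n
    have h := fourierCoeff_liftIco_eq (T := 2*π) (a := -π) (Ffun x) n
    exact h.trans (fourierCoeffOn_Ffun x n _)
  have hsummable : Summable (fourierCoeff (⇑f)) := by
    rw [show fourierCoeff (⇑f) = cfun x from funext hcoeff]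
    apply Summable.of_norm
    have hnorm : ∀ n : ℤ, ‖cfun x n‖ = |qfun x n| := by
      intro n
      rw [cfun, norm_mul, norm_mul, norm_zpow, norm_neg, norm_one, one_zpow, norm_neg,
        Complex.norm_I, Complex.norm_real, Real.norm_eq_abs]
      ring
    rw [show (fun n : ℤ => ‖cfun x n‖) = fun n : ℤ => |qfun x n| from funext hnorm]
    exact summable_qfun x
  have hsum := has_pointwise_sum_fourier_series_of_summable hsummable
    ((2*a : ℝ) : AddCircle (2*π))
  have hval : f ((2*a : ℝ) : AddCircle (2*π)) = Ffun x (2*a) := by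
    show AddCircle.liftIco (2*π) (-π) (Ffun x) _ = _
    apply AddCircle.liftIco_coe_apply
    constructor
    · nlinarith [pi_pos]
    · nlinarith [pi_pos]
  rw [hval] at hsum
  simp_rw [hcoeff, smul_eq_mul] at hsum
  -- multiply by exp(I a)
  have hmul := hsum.mul_left (Complex.exp (((a:ℝ):ℂ) * Complex.I))
  have hS : Complex.exp (((a:ℝ):ℂ) * Complex.I) * Ffun x (2*a)
      = ((Real.sinh (2*a*x) : ℝ) : ℂ) := by
    rw [Ffun, ← mul_assoc, ← Complex.exp_add,
      show ((a:ℝ):ℂ) * Complex.I + -(Complex.I * ((2*a : ℝ):ℂ))/2 = 0 by push_cast; ring,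
      Complex.exp_zero, one_mul,
      show ((x:ℂ) * ((2*a:ℝ):ℂ)) = (((2*a*x : ℝ)):ℂ) by push_cast; ring,
      ← Complex.ofReal_sinh]
  rw [hS] at hmul
  have hpair := hmul.nat_add_neg_add_one
  have hterm : ∀ k : ℕ,
      Complex.exp (((a:ℝ):ℂ) * Complex.I) * (cfun x k * fourier (k:ℤ) ((2*a : ℝ) : AddCircle (2*π)))
        + Complex.exp (((a:ℝ):ℂ) * Complex.I) *
            (cfun x (-((k:ℤ)+1)) * fourier (-((k:ℤ)+1)) ((2*a : ℝ) : AddCircle (2*π)))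
      = ((2 * (-1:ℝ)^k * Real.sin ((2*(k:ℝ)+1)*a) * qfun x k : ℝ) : ℂ) := by
    intro k
    have hfour : ∀ m : ℤ, (fourier m ((2*a : ℝ) : AddCircle (2*π)))
        = Complex.exp (((2*(m:ℝ)*a : ℝ):ℂ) * Complex.I) := by
      intro m
      rw [fourier_coe_apply]
      congr 1
      have hπ : ((π:ℝ):ℂ) ≠ 0 := Complex.ofReal_ne_zero.mpr pi_ne_zero
      push_cast
      field_simp
    rw [hfour, hfour]
    rw [cfun, cfun, qfun_neg]
    rw [show ((-1:ℂ))^(-((k:ℤ)+1)) = -(-1:ℂ)^(k:ℕ) by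
      rw [zpow_neg, zpow_add₀ (by norm_num : (-1:ℂ) ≠ 0), zpow_one, zpow_natCast, mul_inv,
        inv_neg, inv_one, ← inv_pow, inv_neg, inv_one]
      ring]
    rw [show ((-1:ℂ))^((k:ℕ):ℤ) = (-1:ℂ)^(k:ℕ) from zpow_natCast _ _]
    have e1 : Complex.exp (((a:ℝ):ℂ) * Complex.I) *
        Complex.exp (((2 * ((k:ℤ):ℝ) * a : ℝ) : ℂ) * Complex.I)
        = Complex.exp ((((2*(k:ℝ)+1)*a : ℝ):ℂ) * Complex.I) := by
      rw [← Complex.exp_add]; congr 1; push_cast; ring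
    have e2 : Complex.exp (((a:ℝ):ℂ) * Complex.I) *
        Complex.exp (((2 * ((-((k:ℤ)+1) : ℤ):ℝ) * a : ℝ) : ℂ) * Complex.I)
        = Complex.exp (((-((2*(k:ℝ)+1)*a) : ℝ):ℂ) * Complex.I) := by
      rw [← Complex.exp_add]; congr 1; push_cast; ring
    have hsin : Complex.exp ((2*(k:ℂ)+1)*(a:ℂ)*Complex.I)
        - Complex.exp (-((2*(k:ℂ)+1)*(a:ℂ))*Complex.I)
        = 2 * Complex.I * Complex.sin ((2*(k:ℂ)+1)*(a:ℂ)) := by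
      rw [Complex.sin]
      linear_combination (Complex.exp ((2*(k:ℂ)+1)*(a:ℂ)*Complex.I)
        - Complex.exp (-((2*(k:ℂ)+1)*(a:ℂ))*Complex.I)) * Complex.I_sq
    push_cast at e1 e2 ⊢
    linear_combination ((-1:ℂ)^k * (-Complex.I) * ((qfun x k : ℝ):ℂ)) * e1
      - ((-1:ℂ)^k * (-Complex.I) * ((qfun x k : ℝ):ℂ)) * e2
      + ((-1:ℂ)^k * (-Complex.I) * ((qfun x k : ℝ):ℂ)) * hsin
      - (2*(-1:ℂ)^k * ((qfun x k : ℝ):ℂ) * Complex.sin ((2*(k:ℂ)+1)*(a:ℂ))) * Complex.I_sq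
  rw [show (fun n : ℕ =>
      Complex.exp (((a:ℝ):ℂ) * Complex.I) * (cfun x n * fourier (n:ℤ) ((2*a : ℝ) : AddCircle (2*π)))
        + Complex.exp (((a:ℝ):ℂ) * Complex.I) *
            (cfun x (-((n:ℤ)+1)) * fourier (-((n:ℤ)+1)) ((2*a : ℝ) : AddCircle (2*π))))
      = (fun k : ℕ => ((2 * (-1:ℝ)^k * Real.sin ((2*(k:ℝ)+1)*a) * qfun x k : ℝ) : ℂ))
    from funext hterm] at hpair
  exact Complex.hasSum_ofReal.mp hpair

lemma integral_exp_neg_mul_Ioi {c : ℝ} (hc : 0 < c) :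
    ∫ τ in Set.Ioi (0:ℝ), Real.exp (-(c * τ)) = 1 / c := by
  have hderiv : ∀ τ ∈ Set.Ici (0:ℝ),
      HasDerivAt (fun t : ℝ => -(Real.exp (-(c * t)) / c)) (Real.exp (-(c * τ))) τ := by
    intro τ _
    have h : HasDerivAt (fun t : ℝ => -(c * t)) (-c) τ := by
      simpa using ((hasDerivAt_id τ).const_mul (-c))
    have := (h.exp.div_const c).neg
    refine this.congr_deriv ?_
    field_simp
  have hint : IntegrableOn (fun τ : ℝ => Real.exp (-(c * τ))) (Set.Ioi 0) := by
    simpa [neg_mul] using exp_neg_integrableOn_Ioi 0 hc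
  have htend : Filter.Tendsto (fun t : ℝ => -(Real.exp (-(c * t)) / c)) Filter.atTop (nhds 0) := by
    have h1 : Filter.Tendsto (fun t : ℝ => c * t) Filter.atTop Filter.atTop :=
      Filter.Tendsto.const_mul_atTop hc Filter.tendsto_id
    have h2 : Filter.Tendsto (fun t : ℝ => Real.exp (-(c * t))) Filter.atTop (nhds 0) :=
      Real.tendsto_exp_neg_atTop_nhds_zero.comp h1
    simpa using (h2.div_const c).neg
  have := MeasureTheory.integral_Ioi_of_hasDerivAt_of_tendsto' hderiv hint htend
  rw [this]
  simp [one_div]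

/-- For every `γ ∈ (0,2)` and every `x ≠ 0`,
`∫₀^∞ θ₁(γ²/8, (γ²/4)iτ) e^{−πγ²x²τ/4} dτ = 4 sinh(γ²πx/4) / (γ² x cosh(πx))`. -/
theorem laplace_theta1_gamma (γ x : ℝ) (hγ : γ ∈ Set.Ioo (0 : ℝ) 2) (hx : x ≠ 0) :
    ∫ τ in Set.Ioi (0 : ℝ), theta1 (γ ^ 2 / 8) (γ ^ 2 / 4 * τ) *
        Real.exp (-(π * γ ^ 2 * x ^ 2 * τ) / 4) =
      4 * Real.sinh (γ ^ 2 * π * x / 4) / (γ ^ 2 * x * Real.cosh (π * x)) := by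
  obtain ⟨hγ0, hγ2⟩ := hγ
  set a : ℝ := π * γ^2 / 8 with ha_def
  have ha0 : 0 < a := by rw [ha_def]; positivity
  have ha1 : a < π/2 := by
    rw [ha_def, div_lt_div_iff₀ (by norm_num) (by norm_num)]
    nlinarith [mul_pos pi_pos (mul_pos (sub_pos.mpr hγ2) (show (0:ℝ) < 2+γ by linarith))]
  set c : ℕ → ℝ := fun n => π*γ^2/4 * (((n:ℝ)+1/2)^2 + x^2) with hc_def
  have hc : ∀ n : ℕ, 0 < c n := by intro n; rw [hc_def]; positivity
  have hrepr : ∀ τ : ℝ, theta1 (γ^2/8) (γ^2/4*τ) * Real.exp (-(π*γ^2*x^2*τ)/4)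
      = ∑' n : ℕ, 2*(-1:ℝ)^n * Real.sin ((2*(n:ℝ)+1)*a) * Real.exp (-(c n * τ)) := by
    intro τ
    rw [theta1, show 2 * Real.exp (-(π*(γ^2/4*τ))/4) *
        (∑' n : ℕ, (-1:ℝ)^n * Real.exp (-((n:ℝ)*((n:ℝ)+1))*π*(γ^2/4*τ)) *
          Real.sin ((2*(n:ℝ)+1)*π*(γ^2/8))) * Real.exp (-(π*γ^2*x^2*τ)/4)
      = (2 * Real.exp (-(π*(γ^2/4*τ))/4) * Real.exp (-(π*γ^2*x^2*τ)/4)) *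
        (∑' n : ℕ, (-1:ℝ)^n * Real.exp (-((n:ℝ)*((n:ℝ)+1))*π*(γ^2/4*τ)) *
          Real.sin ((2*(n:ℝ)+1)*π*(γ^2/8))) by ring, ← tsum_mul_left]
    apply tsum_congr
    intro n
    rw [show (2*(n:ℝ)+1)*π*(γ^2/8) = (2*(n:ℝ)+1)*a by rw [ha_def]; ring,
      show -(c n * τ) = -(π*(γ^2/4*τ))/4 + -(π*γ^2*x^2*τ)/4 + (-((n:ℝ)*((n:ℝ)+1))*π*(γ^2/4*τ))
        by simp only [hc_def]; ring,
      Real.exp_add, Real.exp_add]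
    ring
  simp only [hrepr]
  have hint : ∀ n : ℕ, IntegrableOn
      (fun τ => 2*(-1:ℝ)^n * Real.sin ((2*(n:ℝ)+1)*a) * Real.exp (-(c n * τ))) (Set.Ioi 0) := by
    intro n
    have := (exp_neg_integrableOn_Ioi 0 (hc n)).const_mul (2*(-1:ℝ)^n * Real.sin ((2*(n:ℝ)+1)*a))
    simpa [neg_mul, mul_assoc, IntegrableOn] using this
  have hnormval : ∀ n : ℕ, (∫ τ in Set.Ioi (0:ℝ),
        ‖2*(-1:ℝ)^n * Real.sin ((2*(n:ℝ)+1)*a) * Real.exp (-(c n * τ))‖)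
      = |2*(-1:ℝ)^n * Real.sin ((2*(n:ℝ)+1)*a)| * (1/c n) := by
    intro n
    have heq : ∀ τ : ℝ, ‖2*(-1:ℝ)^n * Real.sin ((2*(n:ℝ)+1)*a) * Real.exp (-(c n * τ))‖
        = |2*(-1:ℝ)^n * Real.sin ((2*(n:ℝ)+1)*a)| * Real.exp (-(c n * τ)) := by
      intro τ
      rw [norm_mul, Real.norm_eq_abs, Real.norm_eq_abs, abs_of_pos (Real.exp_pos _)]
    simp only [heq]
    rw [MeasureTheory.integral_const_mul, integral_exp_neg_mul_Ioi (hc n)]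
  have hbound : ∀ n : ℕ, |2*(-1:ℝ)^n * Real.sin ((2*(n:ℝ)+1)*a)| * (1/c n)
      ≤ (2 * (4/(π*γ^2))) * (((n:ℝ)+1/2)⁻¹^2) := by
    intro n
    have h1 : |2*(-1:ℝ)^n * Real.sin ((2*(n:ℝ)+1)*a)| ≤ 2 := by
      rw [abs_mul, abs_mul]
      have := abs_sin_le_one ((2*(n:ℝ)+1)*a)
      have h2 : |(2:ℝ)| = 2 := by norm_num
      have h3 : |(-1:ℝ)^n| = 1 := by rw [_root_.abs_pow, abs_neg, abs_one, one_pow]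
      rw [h2, h3]
      nlinarith [abs_nonneg (Real.sin ((2*(n:ℝ)+1)*a))]
    have h4 : 1/c n ≤ (4/(π*γ^2)) * (((n:ℝ)+1/2)⁻¹^2) := by
      simp only [hc_def]
      rw [inv_pow, ← one_div, div_mul_div_comm, mul_one]
      rw [div_le_div_iff₀ (by positivity) (by positivity)]
      have : ((n:ℝ)+1/2)^2 ≤ ((n:ℝ)+1/2)^2 + x^2 := by nlinarith [sq_nonneg x]
      nlinarith [pi_pos, sq_nonneg x, sq_nonneg ((n:ℝ)+1/2), mul_pos pi_pos (by positivity : (0:ℝ) < γ^2)]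
    calc |2*(-1:ℝ)^n * Real.sin ((2*(n:ℝ)+1)*a)| * (1/c n)
        ≤ 2 * (1/c n) := by
          apply mul_le_mul_of_nonneg_right h1 (le_of_lt (by positivity))
      _ ≤ 2 * ((4/(π*γ^2)) * (((n:ℝ)+1/2)⁻¹^2)) := by
          apply mul_le_mul_of_nonneg_left h4 (by norm_num)
      _ = (2 * (4/(π*γ^2))) * (((n:ℝ)+1/2)⁻¹^2) := by ring
  have hsummable : Summable (fun n : ℕ => ∫ τ in Set.Ioi (0:ℝ),
      ‖2*(-1:ℝ)^n * Real.sin ((2*(n:ℝ)+1)*a) * Real.exp (-(c n * τ))‖) := by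
    have hmaj : Summable (fun n : ℕ => (2 * (4/(π*γ^2))) * (((n:ℝ)+1/2)⁻¹^2)) :=
      summable_base.mul_left _
    exact Summable.of_nonneg_of_le
      (fun n => MeasureTheory.integral_nonneg (fun τ => norm_nonneg _))
      (fun n => le_trans (le_of_eq (hnormval n)) (hbound n)) hmaj
  rw [← MeasureTheory.integral_tsum_of_summable_integral_norm hint hsummable]
  have hval : ∀ n : ℕ, (∫ τ in Set.Ioi (0:ℝ),
        2*(-1:ℝ)^n * Real.sin ((2*(n:ℝ)+1)*a) * Real.exp (-(c n * τ)))
      = (2*(-1:ℝ)^n * Real.sin ((2*(n:ℝ)+1)*a) * qfun x n) * (4/(γ^2*x*Real.cosh (π*x))) := by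
    intro n
    rw [MeasureTheory.integral_const_mul, integral_exp_neg_mul_Ioi (hc n)]
    rw [qfun]
    simp only [hc_def]
    have hcosh : Real.cosh (π*x) ≠ 0 := ne_of_gt (Real.cosh_pos _)
    have hπ : (π:ℝ) ≠ 0 := pi_ne_zero
    have hγ' : γ ≠ 0 := ne_of_gt hγ0
    have hD : x^2 + ((n:ℝ)+1/2)^2 ≠ 0 := by positivity
    have hD2 : ((n:ℝ)+1/2)^2 + x^2 ≠ 0 := by positivity
    field_simp
    push_cast
    ring
  rw [tsum_congr hval]
  have hfinal := (hasSum_sinh_series x a ha0 ha1).mul_right (4/(γ^2*x*Real.cosh (π*x)))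
  rw [hfinal.tsum_eq, show 2*a*x = γ^2*π*x/4 by rw [ha_def]; ring]
  ring
end

section
/- For every real number x, one has ∬_{(0,∞)²} a e^{−a} b^{ix} / (√(ab)(a + b)) da db = π Γ(1 + ix) / cosh(πx), where Γ denotes the complex Gamma function and b^{ix} := e^{i x log b}. -/
open Real MeasureTheory Complex Set

lemma map_Ioo : (fun u : ℝ => u / (1 - u)) '' Ioo 0 1 = Ioi 0 := by
  ext t
  constructor
  · rintro ⟨u, ⟨h0, h1⟩, rfl⟩
    exact div_pos h0 (by linarith)
  · intro ht
    refine ⟨t / (1 + t), ⟨div_pos ht (by linarith [ht.out]), ?_⟩, ?_⟩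
    · rw [div_lt_one (by linarith [ht.out])]; linarith [ht.out]
    · have h1t : (1:ℝ) + t ≠ 0 := by have := ht.out; intro h; linarith
      field_simp
      ring

lemma inj_Ioo : InjOn (fun u : ℝ => u / (1 - u)) (Ioo 0 1) := by
  rintro u ⟨hu0, hu1⟩ v ⟨hv0, hv1⟩ h
  have h1u : (1:ℝ) - u ≠ 0 := by linarith
  have h1v : (1:ℝ) - v ≠ 0 := by linarith
  field_simp at h
  nlinarith [h]

lemma deriv_Ioo : ∀ u ∈ Ioo (0:ℝ) 1,
    HasDerivWithinAt (fun u : ℝ => u / (1 - u)) (((1 - u)^2)⁻¹) (Ioo 0 1) u := fun u hu => by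
  have h1u : (1:ℝ) - u ≠ 0 := by rcases hu with ⟨h0, h1⟩; linarith
  have h := (hasDerivAt_id u).div ((hasDerivAt_id u).const_sub 1) h1u
  convert h.hasDerivWithinAt using 1
  · rfl
  · rfl
  · rfl
  · simp only [id]; ring

lemma ofReal_div_cpow {p q : ℝ} (hp : 0 ≤ p) (hq : 0 < q) (w : ℂ) :
    ((p / q : ℝ) : ℂ) ^ w = (p : ℂ) ^ w * ((q : ℂ) ^ w)⁻¹ := by
  have harg : (q : ℂ).arg ≠ π := by
    rw [Complex.arg_ofReal_of_nonneg hq.le]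
    exact fun h => Real.pi_ne_zero h.symm
  rw [div_eq_mul_inv, Complex.ofReal_mul,
    mul_cpow_ofReal_nonneg hp (by positivity), Complex.ofReal_inv,
    Complex.inv_cpow _ _ harg]

lemma beta_pointwise {s : ℂ} {u : ℝ} (hu : u ∈ Ioo (0:ℝ) 1) :
    |((1 - u)^2)⁻¹| • (((u / (1 - u) : ℝ) : ℂ) ^ (s - 1) / (1 + ((u / (1 - u) : ℝ) : ℂ))) =
      (u : ℂ) ^ (s - 1) * ((1 : ℂ) - (u : ℂ)) ^ ((1 - s) - 1) := by
  obtain ⟨h0, h1⟩ := hu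
  have h1u : (0:ℝ) < 1 - u := by linarith
  have hz : ((1 - u : ℝ) : ℂ) ≠ 0 := by exact_mod_cast h1u.ne'
  have hz' : (1 : ℂ) - (u : ℂ) ≠ 0 := by
    have : ((1 - u : ℝ) : ℂ) = 1 - (u:ℂ) := by push_cast; ring
    rwa [this] at hz
  have hden : (1 : ℂ) + ((u / (1 - u) : ℝ) : ℂ) = (((1 - u)⁻¹ : ℝ) : ℂ) := by
    push_cast
    field_simp
    ring
  rw [hden, ofReal_div_cpow h0.le h1u, ← Complex.cpow_neg, Complex.ofReal_inv]
  have hexp : ((1-u:ℝ):ℂ)^(-(s-1)) = ((1-u:ℝ):ℂ) * ((1-u:ℝ):ℂ)^(-s) := by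
    rw [show -(s-1) = 1 + -s by ring, Complex.cpow_add _ _ hz, Complex.cpow_one]
  rw [Complex.real_smul, hexp, abs_of_pos (by positivity : (0:ℝ) < ((1-u)^2)⁻¹)]
  have h2 : ((1:ℂ) - (u:ℂ)) ^ ((1-s)-1) = ((1-u:ℝ):ℂ)^(-s) := by
    rw [show (1:ℂ) - s - 1 = -s by ring]
    norm_cast
  rw [h2]
  push_cast
  field_simp

lemma integrableOn_K {s : ℂ} (h0 : 0 < s.re) (h1 : s.re < 1) :
    IntegrableOn (fun t : ℝ => (t : ℂ) ^ (s - 1) / (1 + (t : ℂ))) (Ioi 0) := by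
  have h1' : 0 < (1 - s).re := by simp [Complex.sub_re]; linarith
  rw [← map_Ioo, integrableOn_image_iff_integrableOn_abs_deriv_smul measurableSet_Ioo
    deriv_Ioo inj_Ioo]
  have hbeta : IntegrableOn
      (fun u : ℝ => (u : ℂ) ^ (s - 1) * ((1 : ℂ) - (u : ℂ)) ^ ((1 - s) - 1)) (Ioo 0 1) := by
    have := (Complex.betaIntegral_convergent h0 h1').1
    rw [← intervalIntegrable_iff_integrableOn_Ioo_of_le zero_le_one]
    exact Complex.betaIntegral_convergent h0 h1'
  exact hbeta.congr_fun (fun u hu => (beta_pointwise hu).symm ▸ rfl) measurableSet_Ioo |>.congr_fun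
    (fun u hu => rfl) measurableSet_Ioo

lemma integral_K {s : ℂ} (h0 : 0 < s.re) (h1 : s.re < 1) :
    ∫ t in Ioi (0:ℝ), (t : ℂ) ^ (s - 1) / (1 + (t : ℂ)) =
      Complex.Gamma s * Complex.Gamma (1 - s) := by
  have h1' : 0 < (1 - s).re := by simp [Complex.sub_re]; linarith
  rw [← map_Ioo, integral_image_eq_integral_abs_deriv_smul measurableSet_Ioo deriv_Ioo inj_Ioo,
    setIntegral_congr_fun measurableSet_Ioo (fun u hu => beta_pointwise hu)]
  have hβ := Complex.Gamma_mul_Gamma_eq_betaIntegral h0 h1'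
  rw [show s + (1 - s) = 1 by ring, Complex.Gamma_one, one_mul] at hβ
  rw [hβ, Complex.betaIntegral, intervalIntegral.integral_of_le zero_le_one,
    MeasureTheory.integral_Ioc_eq_integral_Ioo]

lemma map_mul_Ioi {a : ℝ} (ha : 0 < a) : (fun t : ℝ => a * t) '' Ioi 0 = Ioi 0 := by
  ext b
  constructor
  · rintro ⟨t, ht, rfl⟩; exact mul_pos ha ht
  · intro hb; exact ⟨b / a, div_pos hb ha, by field_simp⟩

lemma cexp_I_log {r : ℝ} (x : ℝ) (hr : 0 < r) :
    Complex.exp (Complex.I * x * Real.log r) = (r : ℂ) ^ (Complex.I * x) := by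
  rw [Complex.cpow_def_of_ne_zero (by exact_mod_cast hr.ne'), ← Complex.ofReal_log hr.le]
  congr 1
  ring

lemma sqrt_cpow {t : ℝ} (ht : 0 < t) :
    ((Real.sqrt t : ℝ) : ℂ) = (t : ℂ) ^ (1/2 : ℂ) := by
  rw [Real.sqrt_eq_rpow, Complex.ofReal_cpow ht.le]
  norm_num

lemma cpow_split {t : ℝ} (ht : 0 < t) (x : ℝ) :
    (t : ℂ) ^ ((1/2 + Complex.I * x) - 1) = (t : ℂ) ^ (Complex.I * x) * ((Real.sqrt t : ℝ) : ℂ)⁻¹ := by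
  have htz : (t : ℂ) ≠ 0 := by exact_mod_cast ht.ne'
  rw [show (1/2 + Complex.I * x) - 1 = Complex.I * x + (-(1/2)) by ring,
    Complex.cpow_add _ _ htz, Complex.cpow_neg, sqrt_cpow ht]

lemma inner_pointwise {a t : ℝ} (ha : 0 < a) (ht : 0 < t) (x : ℝ) :
    |a| • (((a * Real.exp (-a) / (Real.sqrt (a * (a * t)) * (a + a * t)) : ℝ) : ℂ) *
        Complex.exp (Complex.I * x * Real.log (a * t))) =
      ((Real.exp (-a) : ℝ) : ℂ) * (a : ℂ) ^ (Complex.I * (x:ℂ)) *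
        ((t : ℂ) ^ ((1/2 + Complex.I * x) - 1) / (1 + (t : ℂ))) := by
  have hsq : Real.sqrt (a * (a * t)) = a * Real.sqrt t := by
    rw [show a * (a * t) = a^2 * t by ring, Real.sqrt_mul (sq_nonneg a), Real.sqrt_sq ha.le]
  have hlog : Complex.exp (Complex.I * x * Real.log (a * t)) =
      (a : ℂ) ^ (Complex.I * (x:ℂ)) * (t : ℂ) ^ (Complex.I * (x:ℂ)) := by
    rw [Real.log_mul ha.ne' ht.ne', ← cexp_I_log x ha, ← cexp_I_log x ht, ← Complex.exp_add]
    congr 1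
    push_cast
    ring
  rw [hsq, hlog, cpow_split ht, abs_of_pos ha, Complex.real_smul]
  have hsa : (0:ℝ) < Real.sqrt t := Real.sqrt_pos.mpr ht
  have h1t : ((1:ℂ) + (t:ℂ)) ≠ 0 := by
    have : ((1 + t : ℝ) : ℂ) = 1 + (t:ℂ) := by push_cast; ring
    rw [← this]
    exact_mod_cast (by positivity : (1 + t : ℝ) ≠ 0)
  have haz : (a : ℂ) ≠ 0 := by exact_mod_cast ha.ne'
  have hsz : ((Real.sqrt t : ℝ) : ℂ) ≠ 0 := by exact_mod_cast hsa.ne'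
  push_cast
  have hden : ((a:ℂ)^2*(Real.sqrt t:ℂ) + (a:ℂ)^2*(Real.sqrt t:ℂ)*(t:ℂ)) ≠ 0 := by
    have : (a^2*Real.sqrt t + a^2*Real.sqrt t*t : ℝ) ≠ 0 := by positivity
    exact_mod_cast this
  field_simp

lemma sre (x : ℝ) : ((1/2 : ℂ) + Complex.I * x).re = 1/2 := by simp

lemma hasDeriv_mul_Ioi {a : ℝ} : ∀ t ∈ Ioi (0:ℝ),
    HasDerivWithinAt (fun t : ℝ => a * t) a (Ioi 0) t := fun t _ => by
  simpa using ((hasDerivAt_id t).const_mul a).hasDerivWithinAt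

lemma inj_mul {a : ℝ} (ha : 0 < a) : InjOn (fun t : ℝ => a * t) (Ioi 0) :=
  (mul_right_injective₀ ha.ne').injOn

lemma inner_integrable {a : ℝ} (ha : 0 < a) (x : ℝ) :
    IntegrableOn (fun b : ℝ => ((a * Real.exp (-a) / (Real.sqrt (a * b) * (a + b)) : ℝ) : ℂ) *
      Complex.exp (Complex.I * x * Real.log b)) (Ioi 0) := by
  rw [← map_mul_Ioi ha, integrableOn_image_iff_integrableOn_abs_deriv_smul measurableSet_Ioi
    hasDeriv_mul_Ioi (inj_mul ha)]
  have hK := ((integrableOn_K (s := 1/2 + Complex.I * x) (by rw [sre]; norm_num)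
      (by rw [sre]; norm_num)).const_mul
      (((Real.exp (-a) : ℝ) : ℂ) * (a : ℂ) ^ (Complex.I * (x:ℂ))))
  exact IntegrableOn.congr_fun hK (fun t ht => (inner_pointwise ha ht x).symm) measurableSet_Ioi

lemma inner_integral_eq {a : ℝ} (ha : 0 < a) (x : ℝ) :
    ∫ b in Ioi (0:ℝ), ((a * Real.exp (-a) / (Real.sqrt (a * b) * (a + b)) : ℝ) : ℂ) *
        Complex.exp (Complex.I * x * Real.log b) =
      ((Real.exp (-a) : ℝ) : ℂ) * (a : ℂ) ^ (Complex.I * (x:ℂ)) *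
        ∫ t in Ioi (0:ℝ), (t : ℂ) ^ ((1/2 + Complex.I * (x:ℂ)) - 1) / (1 + (t : ℂ)) := by
  have h := integral_image_eq_integral_abs_deriv_smul measurableSet_Ioi hasDeriv_mul_Ioi
    (inj_mul ha) (fun b : ℝ => ((a * Real.exp (-a) / (Real.sqrt (a * b) * (a + b)) : ℝ) : ℂ) *
      Complex.exp (Complex.I * x * Real.log b))
  rw [map_mul_Ioi ha] at h
  rw [h, setIntegral_congr_fun measurableSet_Ioi (fun t ht => inner_pointwise ha ht x),
    integral_const_mul]

lemma norm_inner {a : ℝ} (ha : 0 < a) (x : ℝ) :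
    ∫ b in Ioi (0:ℝ), ‖((a * Real.exp (-a) / (Real.sqrt (a * b) * (a + b)) : ℝ) : ℂ) *
        Complex.exp (Complex.I * x * Real.log b)‖ =
      Real.exp (-a) *
        ∫ t in Ioi (0:ℝ), ‖(t : ℂ) ^ ((1/2 + Complex.I * (x:ℂ)) - 1) / (1 + (t : ℂ))‖ := by
  have h := integral_image_eq_integral_abs_deriv_smul measurableSet_Ioi hasDeriv_mul_Ioi
    (inj_mul ha) (fun b : ℝ => ‖((a * Real.exp (-a) / (Real.sqrt (a * b) * (a + b)) : ℝ) : ℂ) *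
      Complex.exp (Complex.I * x * Real.log b)‖)
  rw [map_mul_Ioi ha] at h
  rw [h, ← integral_const_mul (Real.exp (-a))
      (fun t : ℝ => ‖(t : ℂ) ^ ((1/2 + Complex.I * (x:ℂ)) - 1) / (1 + (t : ℂ))‖)]
  refine setIntegral_congr_fun measurableSet_Ioi (fun t ht => ?_)
  have h1 : |a| • ‖((a * Real.exp (-a) / (Real.sqrt (a * (a * t)) * (a + a * t)) : ℝ) : ℂ) *
      Complex.exp (Complex.I * x * Real.log (a * t))‖ =
      ‖|a| • (((a * Real.exp (-a) / (Real.sqrt (a * (a * t)) * (a + a * t)) : ℝ) : ℂ) *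
        Complex.exp (Complex.I * x * Real.log (a * t)))‖ := by
    rw [norm_smul]
    simp [Real.norm_eq_abs, abs_abs, smul_eq_mul]
  rw [h1, inner_pointwise ha ht x, norm_mul, norm_mul]
  have h2 : ‖((Real.exp (-a) : ℝ) : ℂ)‖ = Real.exp (-a) := by
    rw [Complex.norm_real, Real.norm_eq_abs, abs_of_pos (Real.exp_pos _)]
  have h3 : ‖(a : ℂ) ^ (Complex.I * (x:ℂ))‖ = 1 := by
    rw [Complex.norm_cpow_eq_rpow_re_of_pos ha]
    simp
  rw [h2, h3, mul_one]

lemma meas_F (x : ℝ) : Measurable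
    (fun p : ℝ × ℝ => ((p.1 * Real.exp (-p.1) / (Real.sqrt (p.1 * p.2) * (p.1 + p.2)) : ℝ) : ℂ) *
      Complex.exp (Complex.I * x * Real.log p.2)) := by
  refine Measurable.mul ?_ ?_
  · refine Complex.measurable_ofReal.comp ?_
    refine Measurable.div ?_ ?_
    · exact measurable_fst.mul (Real.measurable_exp.comp measurable_fst.neg)
    · exact (Real.continuous_sqrt.measurable.comp (measurable_fst.mul measurable_snd)).mul
        (measurable_fst.add measurable_snd)
  · exact Complex.measurable_exp.comp
      (measurable_const.mul (Complex.measurable_ofReal.comp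
        (Real.measurable_log.comp measurable_snd)))

/-- For every real `x`,
`∬_{(0,∞)²} a e^{−a} b^{ix} / (√(ab)(a + b)) da db = π Γ(1 + ix) / cosh(πx)`,
where `Γ` is the complex Gamma function and `b^{ix} := e^{i x log b}`. -/
theorem double_integral_gamma (x : ℝ) :
    ∫ p in (Set.Ioi (0 : ℝ)) ×ˢ (Set.Ioi (0 : ℝ)),
        ((p.1 * Real.exp (-p.1) / (Real.sqrt (p.1 * p.2) * (p.1 + p.2)) : ℝ) : ℂ) *
          Complex.exp (Complex.I * x * Real.log p.2) =
      (π : ℂ) * Complex.Gamma (1 + Complex.I * x) / (Real.cosh (π * x) : ℂ) := by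
  have h0 : 0 < ((1/2 : ℂ) + Complex.I * x).re := by rw [sre]; norm_num
  have h1 : ((1/2 : ℂ) + Complex.I * x).re < 1 := by rw [sre]; norm_num
  -- Fubini integrability
  have hint : Integrable
      (fun p : ℝ × ℝ => ((p.1 * Real.exp (-p.1) / (Real.sqrt (p.1 * p.2) * (p.1 + p.2)) : ℝ) : ℂ) *
        Complex.exp (Complex.I * x * Real.log p.2))
      (((volume : Measure ℝ).restrict (Ioi 0)).prod ((volume : Measure ℝ).restrict (Ioi 0))) := by
    rw [integrable_prod_iff ((meas_F x).aestronglyMeasurable)]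
    constructor
    · filter_upwards [self_mem_ae_restrict measurableSet_Ioi] with a ha
      exact inner_integrable ha x
    · set C : ℝ := ∫ t in Ioi (0:ℝ), ‖(t : ℂ) ^ ((1/2 + Complex.I * (x:ℂ)) - 1) / (1 + (t : ℂ))‖
      have hC : Integrable (fun a : ℝ => Real.exp (-a) * C) (volume.restrict (Ioi 0)) := by
        have := (exp_neg_integrableOn_Ioi 0 (zero_lt_one)).mul_const C
        simpa using this
      apply hC.congr
      filter_upwards [self_mem_ae_restrict measurableSet_Ioi] with a ha
      exact (norm_inner ha x).symm
  have hF : IntegrableOn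
      (fun p : ℝ × ℝ => ((p.1 * Real.exp (-p.1) / (Real.sqrt (p.1 * p.2) * (p.1 + p.2)) : ℝ) : ℂ) *
        Complex.exp (Complex.I * x * Real.log p.2)) ((Ioi 0) ×ˢ (Ioi 0))
      ((volume : Measure ℝ).prod (volume : Measure ℝ)) := by
    rw [IntegrableOn, ← Measure.prod_restrict]
    exact hint
  rw [Measure.volume_eq_prod, setIntegral_prod _ hF]
  rw [setIntegral_congr_fun measurableSet_Ioi (fun a (ha : a ∈ Ioi (0:ℝ)) => inner_integral_eq ha x)]
  rw [integral_mul_const, integral_K h0 h1]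
  have hG : (∫ a in Ioi (0:ℝ), ((Real.exp (-a) : ℝ) : ℂ) * (a : ℂ) ^ (Complex.I * (x:ℂ))) =
      Complex.Gamma (1 + Complex.I * x) := by
    rw [Complex.Gamma_eq_integral (by simp : 0 < ((1:ℂ) + Complex.I * (x:ℂ)).re)]
    simp only [Complex.GammaIntegral]
    refine setIntegral_congr_fun measurableSet_Ioi (fun a ha => ?_)
    rw [show (1:ℂ) + Complex.I * x - 1 = Complex.I * x by ring]
  rw [hG, Complex.Gamma_mul_Gamma_one_sub]
  have hsin : Complex.sin ((π:ℂ) * (1/2 + Complex.I * x)) = ((Real.cosh (π * x) : ℝ) : ℂ) := by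
    rw [show (π:ℂ) * (1/2 + Complex.I * x) = (π:ℂ)/2 + ((π * x : ℝ) : ℂ) * Complex.I by push_cast; ring]
    rw [Complex.sin_add, Complex.sin_pi_div_two, Complex.cos_pi_div_two]
    simp [Complex.cos_mul_I, Complex.ofReal_cosh]
  rw [hsin]
  ring
end

section
/- For all real numbers u > 0, β ∈ (0, 1], and θ ∈ ℝ, one has Σ_{p∈ℤ} sin(pθ) e^{−|p − β| u} = sin θ · sinh(βu) / (cosh u − cos θ). -/
open Real

/-- Geometric-type sum `Σ_{n≥0} sin(nθ) r^n = r sinθ / (1 - 2 r cosθ + r²)` for `0 ≤ r < 1`. -/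
lemma aux_hasSum_sin_geom (θ r : ℝ) (hr0 : 0 ≤ r) (hr1 : r < 1) :
    HasSum (fun n : ℕ => Real.sin (n * θ) * r ^ n)
      (r * Real.sin θ / (1 - 2 * r * Real.cos θ + r ^ 2)) := by
  set z : ℂ := (r : ℂ) * Complex.exp (θ * Complex.I) with hz
  have hnorm : ‖z‖ < 1 := by
    have : ‖z‖ = r := by
      rw [hz]
      simp [map_mul, Complex.norm_exp, abs_of_nonneg hr0]
    rw [this]; exact hr1
  have h := (hasSum_geometric_of_norm_lt_one hnorm).mapL Complex.imCLM
  have hterm : ∀ n : ℕ, Complex.imCLM (z ^ n) = Real.sin (n * θ) * r ^ n := by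
    intro n
    have : z ^ n = ((r ^ n : ℝ) : ℂ) * Complex.exp ((n * θ : ℝ) * Complex.I) := by
      rw [hz, mul_pow, ← Complex.exp_nat_mul]
      push_cast
      ring_nf
    simp only [Complex.imCLM_apply, this, Complex.mul_im, Complex.ofReal_re,
      Complex.ofReal_im, Complex.exp_ofReal_mul_I_im, Complex.exp_ofReal_mul_I_re]
    ring
  have hd : 1 - 2 * r * Real.cos θ + r ^ 2 =
      Complex.normSq (1 - z) := by
    have hre : (1 - z).re = 1 - r * Real.cos θ := by
      rw [hz]
      simp [Complex.sub_re, Complex.mul_re, Complex.exp_ofReal_mul_I_re,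
        Complex.exp_ofReal_mul_I_im]
    have him : (1 - z).im = -(r * Real.sin θ) := by
      rw [hz]
      simp [Complex.sub_im, Complex.mul_im, Complex.exp_ofReal_mul_I_re,
        Complex.exp_ofReal_mul_I_im]
    rw [Complex.normSq_apply, hre, him]
    have hpyth : Real.sin θ ^ 2 + Real.cos θ ^ 2 = 1 := Real.sin_sq_add_cos_sq θ
    nlinarith [hpyth]
  have hval : Complex.imCLM ((1 - z)⁻¹) =
      r * Real.sin θ / (1 - 2 * r * Real.cos θ + r ^ 2) := by
    have him : (1 - z).im = -(r * Real.sin θ) := by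
      rw [hz]
      simp [Complex.sub_im, Complex.mul_im, Complex.exp_ofReal_mul_I_re,
        Complex.exp_ofReal_mul_I_im]
    simp only [Complex.imCLM_apply, Complex.inv_im, him, hd]
    ring
  rw [hval] at h
  refine h.congr_fun ?_
  intro n
  exact (hterm n).symm

/-- For `u > 0`, `β ∈ (0, 1]` and `θ ∈ ℝ`:
`Σ_{p∈ℤ} sin(pθ) e^{−|p − β| u} = sin θ sinh(βu) / (cosh u − cos θ)`. -/
theorem tsum_int_sin_exp_abs (u β θ : ℝ) (hu : 0 < u) (hβ : β ∈ Set.Ioc (0 : ℝ) 1) :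
    ∑' p : ℤ, Real.sin ((p : ℝ) * θ) * Real.exp (-|((p : ℝ) - β)| * u) =
      Real.sin θ * Real.sinh (β * u) / (Real.cosh u - Real.cos θ) := by
  obtain ⟨hβ0, hβ1⟩ := hβ
  set r : ℝ := Real.exp (-u) with hr
  have hr0 : 0 < r := Real.exp_pos _
  have hr1 : r < 1 := by
    rw [hr, Real.exp_lt_one_iff]; linarith
  set d : ℝ := 1 - 2 * r * Real.cos θ + r ^ 2 with hdd
  have hd_pos : 0 < d := by
    have h1 : Real.cos θ ≤ 1 := Real.cos_le_one θ
    nlinarith [sq_nonneg (1 - r)]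
  set f : ℤ → ℝ := fun p => Real.sin ((p : ℝ) * θ) * Real.exp (-|((p : ℝ) - β)| * u) with hf
  set T : ℝ := r * Real.sin θ / d with hT
  have hgeom : HasSum (fun n : ℕ => Real.sin (n * θ) * r ^ n) T :=
    aux_hasSum_sin_geom θ r hr0.le hr1
  -- nonnegative part
  have hA : HasSum (fun n : ℕ => f (n : ℤ)) (Real.exp (β * u) * T) := by
    refine (hgeom.mul_left (Real.exp (β * u))).congr_fun ?_
    intro n
    rcases Nat.eq_zero_or_pos n with hn | hn
    · subst hn; simp [hf]
    · have h1n : (1 : ℝ) ≤ (n : ℝ) := by exact_mod_cast hn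
      have habs : |((n : ℤ) : ℝ) - β| = (n : ℝ) - β := by
        rw [abs_of_nonneg (by push_cast; linarith : (0:ℝ) ≤ ((n : ℤ) : ℝ) - β)]
        push_cast; ring
      have hexp : Real.exp (-|((n : ℤ) : ℝ) - β| * u) = Real.exp (β * u) * r ^ n := by
        rw [habs, hr, ← Real.exp_nat_mul, ← Real.exp_add]
        ring_nf
      simp only [hf, hexp]
      push_cast
      ring
  -- negative part
  have hshift : HasSum (fun n : ℕ => Real.sin (((n : ℝ) + 1) * θ) * r ^ (n + 1)) T := by
    have h0 : HasSum (fun n : ℕ => Real.sin (((n + 1 : ℕ) : ℝ) * θ) * r ^ (n + 1)) T := by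
      apply (hasSum_nat_add_iff (f := fun n : ℕ => Real.sin ((n : ℝ) * θ) * r ^ n) 1).mpr
      simpa using hgeom
    exact h0.congr_fun fun n => by push_cast; ring_nf
  have hB : HasSum (fun n : ℕ => f (-(n + 1))) (-Real.exp (-(β * u)) * T) := by
    refine (hshift.mul_left (-Real.exp (-(β * u)))).congr_fun ?_
    intro n
    have hn0 : (0 : ℝ) ≤ (n : ℝ) := Nat.cast_nonneg n
    have habs : |((-(n + 1) : ℤ) : ℝ) - β| = (n : ℝ) + 1 + β := by
      rw [abs_of_nonpos (by push_cast; linarith)]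
      push_cast; ring
    have hexp : Real.exp (-|((-(n + 1) : ℤ) : ℝ) - β| * u)
        = Real.exp (-(β * u)) * r ^ (n + 1) := by
      rw [habs, hr, ← Real.exp_nat_mul, ← Real.exp_add]
      push_cast; ring_nf
    have hsin : Real.sin (((-(n + 1) : ℤ) : ℝ) * θ) = -Real.sin (((n : ℝ) + 1) * θ) := by
      rw [show ((-(n + 1) : ℤ) : ℝ) * θ = -(((n : ℝ) + 1) * θ) by push_cast; ring,
        Real.sin_neg]
    simp only [hf, hexp, hsin]
    ring
  have htotal : HasSum f (Real.exp (β * u) * T + -Real.exp (-(β * u)) * T) :=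
    hA.of_nat_of_neg_add_one hB
  rw [htotal.tsum_eq]
  -- final algebra
  have hcos : Real.cos θ ≤ 1 := Real.cos_le_one θ
  have hcosh : 1 < Real.cosh u := Real.one_lt_cosh.mpr (ne_of_gt hu)
  have hden : Real.cosh u - Real.cos θ ≠ 0 := by linarith
  have hdr : d = 2 * r * (Real.cosh u - Real.cos θ) := by
    rw [hdd, hr, Real.cosh_eq, Real.exp_neg]
    have := Real.exp_pos u
    field_simp
    ring
  rw [hT, hdr, Real.sinh_eq]
  have h2r : (2 : ℝ) * r ≠ 0 := by positivity
  field_simp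
  ring
end

section
/- For every real number u > 0, one has Σ_{k∈ℤ} k (−1)^{k−1} e^{−u|k − 1/3|} = sinh(u/3) / (2 cosh²(u/2)). -/
open Real

/-- For every `u > 0`:
`Σ_{k∈ℤ} k (−1)^{k−1} e^{−u|k − 1/3|} = sinh(u/3) / (2 cosh²(u/2))`. -/
theorem tsum_int_alternating_exp_abs (u : ℝ) (hu : 0 < u) :
    ∑' k : ℤ, (k : ℝ) * (-1 : ℝ) ^ (k - 1) * Real.exp (-u * |(k : ℝ) - 1 / 3|) =
      Real.sinh (u / 3) / (2 * Real.cosh (u / 2) ^ 2) := by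
  set q : ℝ := Real.exp (-u) with hqdef
  have hq0 : 0 < q := Real.exp_pos _
  have hq1 : q < 1 := Real.exp_lt_one_iff.mpr (by linarith)
  have hnorm : ‖(-q : ℝ)‖ < 1 := by
    rw [norm_neg, Real.norm_eq_abs, abs_of_pos hq0]; exact hq1
  set S : ℝ := (-q) / (1 - (-q)) ^ 2 with hSdef
  have h0 : HasSum (fun n : ℕ => (n : ℝ) * (-q) ^ n) S :=
    hasSum_coe_mul_geometric_of_norm_lt_one hnorm
  have h1 : HasSum (fun n : ℕ => ((n + 1 : ℕ) : ℝ) * (-q) ^ (n + 1)) S := by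
    refine (hasSum_nat_add_iff (f := fun n : ℕ => (n : ℝ) * (-q) ^ n) 1).mpr ?_
    simpa using h0
  set f : ℤ → ℝ := fun k => (k : ℝ) * (-1 : ℝ) ^ (k - 1) * Real.exp (-u * |(k : ℝ) - 1 / 3|)
    with hfdef
  have hexp : ∀ n : ℕ, Real.exp (-u * ((n : ℝ) + 1 - 1 / 3)) = Real.exp (u / 3) * q ^ (n + 1) := by
    intro n
    rw [show -u * ((n : ℝ) + 1 - 1 / 3) = u / 3 + ((n + 1 : ℕ) : ℝ) * (-u) by push_cast; ring,
      Real.exp_add, Real.exp_nat_mul]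
  have hexp' : ∀ n : ℕ, Real.exp (-u * ((n : ℝ) + 1 + 1 / 3))
      = Real.exp (-(u / 3)) * q ^ (n + 1) := by
    intro n
    rw [show -u * ((n : ℝ) + 1 + 1 / 3) = -(u / 3) + ((n + 1 : ℕ) : ℝ) * (-u) by push_cast; ring,
      Real.exp_add, Real.exp_nat_mul]
  have key : ∀ n : ℕ, f n = (-Real.exp (u / 3)) * ((n : ℝ) * (-q) ^ n) := by
    intro n
    match n with
    | 0 => simp [hfdef]
    | (m + 1) =>
      have hm : (0 : ℝ) ≤ (m : ℝ) + 1 - 1 / 3 := by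
        have : (0 : ℝ) ≤ (m : ℝ) := Nat.cast_nonneg m
        linarith
      simp only [hfdef]
      rw [show ((((m : ℕ) + 1 : ℕ) : ℤ) : ℝ) = (m : ℝ) + 1 by push_cast; ring,
        show (((m : ℕ) + 1 : ℕ) : ℤ) - 1 = (m : ℤ) by push_cast; ring,
        abs_of_nonneg hm, hexp m, zpow_natCast, neg_pow]
      push_cast
      ring
  have key' : ∀ n : ℕ, f (-(n + 1)) = Real.exp (-(u / 3)) * (((n + 1 : ℕ) : ℝ) * (-q) ^ (n + 1)) := by
    intro n
    have hm : (0 : ℝ) ≤ (n : ℝ) + 1 + 1 / 3 := by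
      have : (0 : ℝ) ≤ (n : ℝ) := Nat.cast_nonneg n
      linarith
    simp only [hfdef]
    rw [show (((-((n : ℤ) + 1)) : ℤ) : ℝ) = -((n : ℝ) + 1) by push_cast; ring,
      show (-((n : ℤ) + 1)) - 1 = -(((n : ℕ) + 2 : ℕ) : ℤ) by push_cast; ring,
      show -((n : ℝ) + 1) - 1 / 3 = -((n : ℝ) + 1 + 1 / 3) by ring,
      abs_neg, abs_of_nonneg hm, hexp' n, zpow_neg, zpow_natCast, ← inv_pow, inv_neg, inv_one,
      neg_pow]
    push_cast
    ring
  have hpos : HasSum (fun n : ℕ => f n) ((-Real.exp (u / 3)) * S) := by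
    have heq : (fun n : ℕ => f n) = fun n : ℕ => (-Real.exp (u / 3)) * ((n : ℝ) * (-q) ^ n) :=
      funext key
    rw [heq]
    exact h0.mul_left _
  have hneg : HasSum (fun n : ℕ => f (-(n + 1))) (Real.exp (-(u / 3)) * S) := by
    have heq : (fun n : ℕ => f (-(n + 1)))
        = fun n : ℕ => Real.exp (-(u / 3)) * (((n + 1 : ℕ) : ℝ) * (-q) ^ (n + 1)) := funext key'
    rw [heq]
    exact h1.mul_left _
  have htot : HasSum f ((-Real.exp (u / 3)) * S + Real.exp (-(u / 3)) * S) :=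
    hpos.of_nat_of_neg_add_one hneg
  rw [htot.tsum_eq, hSdef, hqdef, Real.sinh_eq, Real.cosh_eq]
  have e1 : Real.exp (-u) = (Real.exp (u / 2))⁻¹ * (Real.exp (u / 2))⁻¹ := by
    rw [← Real.exp_neg, ← Real.exp_add]
    ring_nf
  have e2 : Real.exp (-(u / 3)) = (Real.exp (u / 3))⁻¹ := Real.exp_neg _
  rw [e1, e2, Real.exp_neg (u / 2)]
  have hA : Real.exp (u / 2) ≠ 0 := Real.exp_ne_zero _
  have hB : Real.exp (u / 3) ≠ 0 := Real.exp_ne_zero _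
  have hC : (Real.exp (u / 2)) ^ 2 + 1 ≠ 0 := by positivity
  have hD : Real.exp (u / 2) + (Real.exp (u / 2))⁻¹ ≠ 0 := by positivity
  field_simp
  rw [sub_neg_eq_add, mul_div_assoc, div_self (pow_ne_zero 2 hC), mul_one]
  ring
end

section
/- For every real number s > 0, one has ∫₀^∞ e^{−st} · (2/√(πt)) · Σ_{k∈ℤ} k (−1)^{k−1} e^{−(k − 1/3)²/t} dt = sinh((2/3)√s) / (√s · cosh²(√s)). -/
open Real MeasureTheory
open Set

section LaplaceThetaAux

lemma image_sub_div (c : ℝ) (hc : 0 < c) : (fun x : ℝ => x - c/x) '' Ioi 0 = univ := by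
  apply eq_univ_of_forall
  intro u
  have h1 : |u| < Real.sqrt (u^2 + 4*c) := by
    rw [← Real.sqrt_sq_eq_abs]
    exact Real.sqrt_lt_sqrt (sq_nonneg u) (by linarith)
  have hsq : Real.sqrt (u^2 + 4*c) ^ 2 = u^2 + 4*c :=
    Real.sq_sqrt (by nlinarith [sq_nonneg u])
  have hx : (0:ℝ) < (u + Real.sqrt (u^2 + 4*c))/2 := by
    have := neg_abs_le u; nlinarith [h1]
  refine ⟨(u + Real.sqrt (u^2 + 4*c))/2, hx, ?_⟩
  have key : ((u + Real.sqrt (u^2 + 4*c))/2)^2 = ((u + Real.sqrt (u^2 + 4*c))/2) * u + c := by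
    nlinarith [hsq]
  have hx0 : ((u + Real.sqrt (u^2 + 4*c))/2) ≠ 0 := ne_of_gt hx
  simp only
  have hcx : c / ((u + Real.sqrt (u^2 + 4*c))/2) = (u + Real.sqrt (u^2 + 4*c))/2 - u := by
    rw [div_eq_iff hx0]; nlinarith [key]
  rw [hcx]; ring

lemma injOn_sub_div (c : ℝ) (hc : 0 < c) : InjOn (fun x : ℝ => x - c/x) (Ioi 0) := by
  intro a ha b hb hab
  simp only [mem_Ioi] at ha hb
  simp only at hab
  have : a * b * (a - c/a) = a * b * (b - c/b) := by rw [hab]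
  have h1 : a * b * (a - c/a) = a^2*b - c*b := by field_simp
  have h2 : a * b * (b - c/b) = a*b^2 - c*a := by field_simp
  rw [h1, h2] at this
  have hfac : (a - b) * (a*b + c) = 0 := by linear_combination this
  have hpos : a*b + c > 0 := by positivity
  have := mul_eq_zero.mp hfac
  rcases this with h | h
  · linarith
  · linarith

lemma hasDeriv_sub_div (c : ℝ) {x : ℝ} (hx : x ∈ Ioi (0:ℝ)) :
    HasDerivWithinAt (fun x : ℝ => x - c/x) (1 + c/x^2) (Ioi 0) x := by
  have hx0 : (x:ℝ) ≠ 0 := ne_of_gt hx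
  have h1 : HasDerivAt (fun x:ℝ => c / x) (-(c / x^2)) x := by
    simpa [div_eq_mul_inv] using (hasDerivAt_inv hx0).const_mul c
  have h : HasDerivAt (fun x : ℝ => x - c/x) (1 - -(c/x^2)) x := (hasDerivAt_id x).sub h1
  simpa using h.hasDerivWithinAt

lemma contOn_glasser (s c : ℝ) : ContinuousOn (fun x : ℝ => Real.exp (-(s*(x-c/x)^2))) (Ioi 0) := by
  apply Real.continuous_exp.comp_continuousOn
  apply ContinuousOn.neg
  apply ContinuousOn.mul (continuousOn_const)
  apply ContinuousOn.pow
  exact continuousOn_id.sub (continuousOn_const.div continuousOn_id (fun x hx => ne_of_gt hx))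

lemma integrableOn_glasser {s c : ℝ} (hs : 0 < s) (hc : 0 < c) :
    IntegrableOn (fun x : ℝ => Real.exp (-(s*(x-c/x)^2))) (Ioi 0) := by
  have hmeas : AEStronglyMeasurable (fun x : ℝ => Real.exp (-(s*(x-c/x)^2)))
      (volume.restrict (Ioi 0)) :=
    (contOn_glasser s c).aestronglyMeasurable measurableSet_Ioi
  have hint : Integrable (fun x : ℝ => Real.exp (2*s*c) * Real.exp (-s * x^2)) := 
    (integrable_exp_neg_mul_sq hs).const_mul _
  refine Integrable.mono hint.restrict hmeas ?_
  filter_upwards [ae_restrict_mem measurableSet_Ioi] with x hx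
  simp only [mem_Ioi] at hx
  have habs : |Real.exp (2*s*c) * Real.exp (-s*x^2)| = Real.exp (2*s*c + (-s*x^2)) := by
    rw [abs_of_pos (by positivity), ← Real.exp_add]
  rw [Real.norm_eq_abs, Real.norm_eq_abs, abs_of_pos (Real.exp_pos _), habs]
  apply Real.exp_le_exp.mpr
  have h1 : s*(x - c/x)^2 = s*x^2 - 2*s*c + s*c^2/x^2 := by field_simp; ring
  have h2 : 0 ≤ s*c^2/x^2 := by positivity
  nlinarith

lemma glasser_value {s c : ℝ} (hs : 0 < s) (hc : 0 < c) :
    ∫ x in Ioi (0:ℝ), Real.exp (-(s*(x-c/x)^2)) = Real.sqrt (π/s) / 2 := by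
  set E : ℝ → ℝ := fun x => Real.exp (-(s*(x-c/x)^2)) with hE
  -- inversion symmetry
  have hinv_deriv : ∀ x ∈ Ioi (0:ℝ), HasDerivWithinAt (fun x : ℝ => c/x) (-(c/x^2)) (Ioi 0) x := by
    intro x hx
    have hx0 : (x:ℝ) ≠ 0 := ne_of_gt hx
    exact ((hasDerivAt_inv hx0).const_mul c |>.congr_deriv (by field_simp)).hasDerivWithinAt
  have hinv_inj : InjOn (fun x : ℝ => c/x) (Ioi 0) := by
    intro a ha b hb hab
    simp only [mem_Ioi] at ha hb
    simp only at hab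
    field_simp at hab
    nlinarith [hab, hc]
  have hinv_img : (fun x : ℝ => c/x) '' Ioi 0 = Ioi 0 := by
    apply Subset.antisymm
    · rintro _ ⟨x, hx, rfl⟩; exact div_pos hc hx
    · rintro y hy; exact ⟨c/y, div_pos hc hy, by field_simp⟩
  have hsymm : ∫ x in Ioi (0:ℝ), E x = ∫ x in Ioi (0:ℝ), (c/x^2) * E x := by
    conv_lhs => rw [← hinv_img]
    rw [integral_image_eq_integral_abs_deriv_smul measurableSet_Ioi hinv_deriv hinv_inj E]
    apply setIntegral_congr_fun measurableSet_Ioi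
    intro x hx
    simp only [mem_Ioi] at hx
    have hx0 : (x:ℝ) ≠ 0 := ne_of_gt hx
    have h3 : c / (c/x) = x := by field_simp
    have this1 : E (c/x) = E x := by
      simp only [hE, h3]
      congr 1
      ring
    simp only [smul_eq_mul]
    rw [this1, abs_neg, abs_of_pos (by positivity)]
  -- integrability of (c/x^2) * E x
  have hIE : IntegrableOn E (Ioi 0) := integrableOn_glasser hs hc
  have hI2 : IntegrableOn (fun x => (c/x^2) * E x) (Ioi 0) := by
    have h0 : IntegrableOn E ((fun x : ℝ => c/x) '' Ioi 0) := by rw [hinv_img]; exact hIE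
    have h1 := (integrableOn_image_iff_integrableOn_abs_deriv_smul measurableSet_Ioi
      hinv_deriv hinv_inj E).mp h0
    apply h1.congr_fun ?_ measurableSet_Ioi
    intro x hx
    simp only [mem_Ioi] at hx
    have hx0 : (x:ℝ) ≠ 0 := ne_of_gt hx
    have h3 : c / (c/x) = x := by field_simp
    have this1 : E (c/x) = E x := by
      simp only [hE, h3]; congr 1; ring
    simp only [smul_eq_mul]
    rw [this1, abs_neg, abs_of_pos (by positivity)]
  -- change of variables u = x - c/x
  have hcv : ∫ u : ℝ, Real.exp (-(s*u^2)) = ∫ x in Ioi (0:ℝ), (1 + c/x^2) * E x := by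
    rw [← setIntegral_univ, ← image_sub_div c hc,
      integral_image_eq_integral_abs_deriv_smul measurableSet_Ioi
        (fun x hx => hasDeriv_sub_div c hx) (injOn_sub_div c hc)]
    apply setIntegral_congr_fun measurableSet_Ioi
    intro x hx
    simp only [mem_Ioi] at hx
    simp only [smul_eq_mul, hE]
    rw [abs_of_pos (by positivity)]
  have hgauss : ∫ u : ℝ, Real.exp (-(s*u^2)) = Real.sqrt (π/s) := by
    simpa [neg_mul] using integral_gaussian s
  have hadd : ∫ x in Ioi (0:ℝ), (1 + c/x^2) * E x
      = (∫ x in Ioi (0:ℝ), E x) + ∫ x in Ioi (0:ℝ), (c/x^2) * E x := by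
    rw [← integral_add hIE hI2]
    congr 1
    funext x
    ring
  have key : Real.sqrt (π/s) = 2 * ∫ x in Ioi (0:ℝ), E x := by
    rw [← hgauss, hcv, hadd, ← hsymm]; ring
  linarith [key]

lemma sq_image_Ioi : (fun x : ℝ => x^2) '' Ioi 0 = Ioi 0 := by
  apply Subset.antisymm
  · rintro _ ⟨x, hx, rfl⟩; exact pow_pos (mem_Ioi.mp hx) 2
  · rintro y hy
    exact ⟨Real.sqrt y, Real.sqrt_pos.mpr hy, Real.sq_sqrt (le_of_lt hy)⟩

lemma sq_deriv : ∀ x ∈ Ioi (0:ℝ), HasDerivWithinAt (fun x : ℝ => x^2) (2*x) (Ioi 0) x := by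
  intro x _
  simpa [mul_comm] using (hasDerivAt_pow 2 x).hasDerivWithinAt

lemma sq_injOn : InjOn (fun x : ℝ => x^2) (Ioi 0) := fun a ha b hb hab => by
  simp only [mem_Ioi] at ha hb
  simp only at hab
  have h : Real.sqrt (a^2) = Real.sqrt (b^2) := by rw [hab]
  rwa [Real.sqrt_sq ha.le, Real.sqrt_sq hb.le] at h

lemma laplace_heat_eqOn {s a : ℝ} (hs : 0 < s) (ha : 0 < a) :
    EqOn (fun x : ℝ => |2*x| • (Real.exp (-s*x^2) * (2 / Real.sqrt (π * x^2)) *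
        Real.exp (-a^2/x^2)))
      (fun x : ℝ => (4 / Real.sqrt π * Real.exp (-(2*a*Real.sqrt s))) *
        Real.exp (-(s*(x - (a/Real.sqrt s)/x)^2))) (Ioi 0) := by
  intro x hx
  simp only [mem_Ioi] at hx
  have hx0 : (x:ℝ) ≠ 0 := ne_of_gt hx
  have hss : Real.sqrt s > 0 := Real.sqrt_pos.mpr hs
  have hsq : Real.sqrt s ^ 2 = s := Real.sq_sqrt hs.le
  have hπ : Real.sqrt (π * x^2) = Real.sqrt π * x := by
    rw [Real.sqrt_mul pi_pos.le, Real.sqrt_sq hx.le]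
  have hexp : s*x^2 + a^2/x^2 = s*(x - (a/Real.sqrt s)/x)^2 + 2*a*Real.sqrt s := by
    field_simp
    linear_combination (a^2 - 2*a*Real.sqrt s*x^2) * hsq
  simp only [smul_eq_mul, hπ, abs_of_pos (by positivity : (0:ℝ) < 2*x)]
  have hE : Real.exp (-s*x^2) * Real.exp (-a^2/x^2)
      = Real.exp (-(2*a*Real.sqrt s)) * Real.exp (-(s*(x - (a/Real.sqrt s)/x)^2)) := by
    rw [← Real.exp_add, ← Real.exp_add]
    congr 1
    linear_combination -hexp
  have hπ0 : Real.sqrt π ≠ 0 := ne_of_gt (Real.sqrt_pos.mpr pi_pos)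
  rw [show 2*x * (Real.exp (-s*x^2) * (2/(Real.sqrt π*x)) * Real.exp (-a^2/x^2))
      = (2*x*(2/(Real.sqrt π*x))) * (Real.exp (-s*x^2) * Real.exp (-a^2/x^2)) by ring, hE]
  rw [show 2*x*(2/(Real.sqrt π*x)) = 4/Real.sqrt π by field_simp; ring]
  ring

lemma laplace_heat_integrable {s a : ℝ} (hs : 0 < s) (ha : 0 < a) :
    IntegrableOn (fun t : ℝ => Real.exp (-s*t) * (2 / Real.sqrt (π * t)) *
      Real.exp (-a^2/t)) (Ioi 0) := by
  set c := a / Real.sqrt s with hc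
  have hc0 : 0 < c := div_pos ha (Real.sqrt_pos.mpr hs)
  rw [show Ioi (0:ℝ) = (fun x : ℝ => x^2) '' Ioi 0 from sq_image_Ioi.symm,
    integrableOn_image_iff_integrableOn_abs_deriv_smul measurableSet_Ioi sq_deriv sq_injOn]
  have h2 : IntegrableOn (fun x : ℝ => (4 / Real.sqrt π * Real.exp (-(2*a*Real.sqrt s))) *
      Real.exp (-(s*(x - c/x)^2))) (Ioi 0) :=
    (integrableOn_glasser hs hc0).const_mul _
  exact IntegrableOn.congr_fun h2 (laplace_heat_eqOn hs ha).symm measurableSet_Ioi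

lemma laplace_heat_integral {s a : ℝ} (hs : 0 < s) (ha : 0 < a) :
    ∫ t in Ioi (0:ℝ), Real.exp (-s*t) * (2 / Real.sqrt (π * t)) * Real.exp (-a^2/t)
      = (2 / Real.sqrt s) * Real.exp (-(2*a*Real.sqrt s)) := by
  set c := a / Real.sqrt s with hc
  have hc0 : 0 < c := div_pos ha (Real.sqrt_pos.mpr hs)
  rw [show Ioi (0:ℝ) = (fun x : ℝ => x^2) '' Ioi 0 from sq_image_Ioi.symm,
    integral_image_eq_integral_abs_deriv_smul measurableSet_Ioi sq_deriv sq_injOn]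
  rw [setIntegral_congr_fun measurableSet_Ioi (laplace_heat_eqOn hs ha)]
  rw [integral_const_mul, glasser_value hs hc0]
  have hπ0 : (0:ℝ) < Real.sqrt π := Real.sqrt_pos.mpr pi_pos
  have hs0 : (0:ℝ) < Real.sqrt s := Real.sqrt_pos.mpr hs
  rw [Real.sqrt_div pi_pos.le]
  field_simp
  ring

lemma abs_k_third_pos (k : ℤ) : (0:ℝ) < |(k:ℝ) - 1/3| := by
  rw [abs_pos]
  intro h
  have h3 : ((3*k : ℤ) : ℝ) = 1 := by push_cast; linarith
  have : (3*k : ℤ) = 1 := by exact_mod_cast h3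
  omega

lemma exp_abs_bound {x : ℝ} (hx : 0 < x) (k : ℤ) :
    Real.exp (-(2*|(k:ℝ)-1/3| *x)) ≤ Real.exp (2*x/3) * Real.exp (-(2*x))^(k.natAbs) := by
  rw [← Real.exp_nat_mul, ← Real.exp_add]
  apply Real.exp_le_exp.mpr
  have h1 : |(k:ℝ)| - 1/3 ≤ |(k:ℝ)-1/3| := by
    have h := abs_sub_abs_le_abs_sub (k:ℝ) (1/3 : ℝ)
    rw [abs_of_pos (by norm_num : (0:ℝ) < 1/3)] at h
    linarith
  have h2 : |(k:ℝ)| = (k.natAbs : ℝ) := by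
    rw [← Int.cast_abs, Int.abs_eq_natAbs, Int.cast_natCast]
  rw [h2] at h1
  nlinarith [mul_le_mul_of_nonneg_right h1 (by positivity : (0:ℝ) ≤ 2*x)]

lemma G_summable {x : ℝ} (hx : 0 < x) (C : ℝ) (hC : 0 ≤ C) :
    Summable (fun k : ℤ => |(k:ℝ)| * (C * Real.exp (-(2*|(k:ℝ)-1/3| *x)))) := by
  set q := Real.exp (-(2*x)) with hq
  have hq0 : 0 < q := Real.exp_pos _
  have hq1 : q < 1 := by
    rw [hq]; exact Real.exp_lt_one_iff.mpr (by linarith)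
  have hqn : ‖q‖ < 1 := by rw [Real.norm_eq_abs, abs_of_pos hq0]; exact hq1
  have hmaj : Summable (fun n : ℕ => (C * Real.exp (2*x/3)) * ((n:ℝ) * q^n)) :=
    ((hasSum_coe_mul_geometric_of_norm_lt_one hqn).summable).mul_left _
  have key : ∀ (k : ℤ), |(k:ℝ)| * (C * Real.exp (-(2*|(k:ℝ)-1/3| *x)))
      ≤ (C * Real.exp (2*x/3)) * ((k.natAbs : ℝ) * q^(k.natAbs)) := by
    intro k
    have h2 : |(k:ℝ)| = (k.natAbs : ℝ) := by
      rw [← Int.cast_abs, Int.abs_eq_natAbs, Int.cast_natCast]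
    rw [h2]
    have hb := exp_abs_bound hx k
    have hnn : (0:ℝ) ≤ (k.natAbs : ℝ) := by positivity
    calc (k.natAbs : ℝ) * (C * Real.exp (-(2*|(k:ℝ)-1/3| *x)))
        ≤ (k.natAbs : ℝ) * (C * (Real.exp (2*x/3) * q^(k.natAbs))) := by
          apply mul_le_mul_of_nonneg_left (mul_le_mul_of_nonneg_left hb hC) hnn
      _ = (C * Real.exp (2*x/3)) * ((k.natAbs : ℝ) * q^(k.natAbs)) := by ring
  apply Summable.of_nat_of_neg
  · apply Summable.of_nonneg_of_le (fun n => by positivity) (fun n => ?_) hmaj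
    have := key (n : ℤ)
    simpa using this
  · apply Summable.of_nonneg_of_le (fun n => by positivity) (fun n => ?_) hmaj
    have := key (-(n : ℤ))
    simpa using this

lemma series_value {x : ℝ} (hx : 0 < x) :
    ∑' k : ℤ, ((k:ℝ) * (-1:ℝ)^(k-1) * ((2/x) * Real.exp (-(2 * |(k:ℝ)-1/3| * x))))
      = Real.sinh (2/3*x) / (x * Real.cosh x ^ 2) := by
  set q := Real.exp (-(2*x)) with hqdef
  have hq0 : 0 < q := Real.exp_pos _
  have hq1 : q < 1 := Real.exp_lt_one_iff.mpr (by linarith)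
  set r : ℝ := -q with hrdef
  have hr : ‖r‖ < 1 := by rw [hrdef, norm_neg, Real.norm_eq_abs, abs_of_pos hq0]; exact hq1
  set f : ℤ → ℝ := fun k => (k:ℝ) * (-1:ℝ)^(k-1) * ((2/x) * Real.exp (-(2 * |(k:ℝ)-1/3| * x)))
    with hfdef
  -- closed form for nonnegative indices
  have hpos : ∀ n : ℕ, f (n:ℤ) = ((2/x) * Real.exp (2*x/3)) * (-((n:ℝ) * r^n)) := by
    intro n
    cases n with
    | zero => simp [hfdef]
    | succ m =>
      have hm : (0:ℝ) ≤ (m:ℝ) := Nat.cast_nonneg m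
      simp only [hfdef]
      push_cast
      rw [show ((m:ℝ)+1) - 1/3 = (m:ℝ) + 2/3 by ring,
        abs_of_pos (show (0:ℝ) < (m:ℝ)+2/3 by linarith),
        show ((m:ℤ)+1)-1 = ((m:ℕ):ℤ) by ring, zpow_natCast,
        show Real.exp (-(2 * ((m:ℝ)+2/3) * x)) = Real.exp (2*x/3) * q^(m+1) by
          rw [hqdef, ← Real.exp_nat_mul, ← Real.exp_add]; congr 1; push_cast; ring,
        hrdef, neg_pow, neg_pow]
      push_cast
      ring
  -- closed form for negative indices
  have hneg : ∀ n : ℕ, f (-((n:ℤ)+1)) = ((2/x) * Real.exp (-(8*x/3))) * (-(((n:ℝ)+1) * r^n)) := by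
    intro n
    have habs : |((-((n:ℤ)+1)):ℝ) - 1/3| = (n:ℝ) + 4/3 := by
      rw [show ((-((n:ℤ)+1)):ℝ) - 1/3 = -((n:ℝ) + 4/3) by push_cast; ring, abs_neg,
        abs_of_pos (by positivity)]
    have hzp : (-1:ℝ)^((-((n:ℤ)+1))-1) = (-1:ℝ)^(n:ℕ) := by
      rw [show (-((n:ℤ)+1))-1 = -((n:ℤ)+2) by ring, zpow_neg,
        show ((n:ℤ)+2) = ((n+2:ℕ):ℤ) by push_cast; ring, zpow_natCast, ← inv_pow, inv_neg,
        inv_one, pow_add, neg_one_sq, mul_one]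
    simp only [hfdef]
    push_cast
    rw [show -((n:ℝ)+1) - 1/3 = -((n:ℝ) + 4/3) by ring, abs_neg,
      abs_of_pos (show (0:ℝ) < (n:ℝ)+4/3 by positivity), hzp,
      show Real.exp (-(2 * ((n:ℝ)+4/3) * x)) = Real.exp (-(8*x/3)) * q^n by
        rw [hqdef, ← Real.exp_nat_mul, ← Real.exp_add]; congr 1; push_cast; ring,
      hrdef, neg_pow]
    push_cast
    ring
  -- summabilities
  have hs1 : Summable (fun n : ℕ => f (n:ℤ)) := by
    rw [show (fun n : ℕ => f (n:ℤ))
        = fun n : ℕ => ((2/x) * Real.exp (2*x/3)) * (-((n:ℝ) * r^n)) from funext hpos]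
    exact ((hasSum_coe_mul_geometric_of_norm_lt_one hr).summable.neg).mul_left _
  have hsum_nr : Summable (fun n : ℕ => (n:ℝ) * r^n) :=
    (hasSum_coe_mul_geometric_of_norm_lt_one hr).summable
  have hsum_r : Summable (fun n : ℕ => r^n) := summable_geometric_of_norm_lt_one hr
  have hs2 : Summable (fun n : ℕ => f (-((n:ℤ)+1))) := by
    rw [show (fun n : ℕ => f (-((n:ℤ)+1)))
        = fun n : ℕ => ((2/x) * Real.exp (-(8*x/3))) * (-(((n:ℝ)+1) * r^n)) from funext hneg]
    apply Summable.mul_left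
    apply Summable.neg
    have : (fun n : ℕ => ((n:ℝ)+1) * r^n) = fun n : ℕ => (n:ℝ)*r^n + r^n := by
      funext n; ring
    rw [this]
    exact hsum_nr.add hsum_r
  -- split the integer sum
  have hsplit := tsum_of_nat_of_neg_add_one hs1 hs2
  have hv1 : ∑' n : ℕ, f (n:ℤ) = ((2/x) * Real.exp (2*x/3)) * (-(r/(1-r)^2)) := by
    rw [show (fun n : ℕ => f (n:ℤ))
        = fun n : ℕ => ((2/x) * Real.exp (2*x/3)) * (-((n:ℝ) * r^n)) from funext hpos,
      tsum_mul_left, tsum_neg, tsum_coe_mul_geometric_of_norm_lt_one hr]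
  have hv2 : ∑' n : ℕ, f (-((n:ℤ)+1))
      = ((2/x) * Real.exp (-(8*x/3))) * (-(r/(1-r)^2 + 1/(1-r))) := by
    rw [show (fun n : ℕ => f (-((n:ℤ)+1)))
        = fun n : ℕ => ((2/x) * Real.exp (-(8*x/3))) * (-(((n:ℝ)+1) * r^n)) from funext hneg,
      tsum_mul_left, tsum_neg]
    congr 2
    rw [show (fun n : ℕ => ((n:ℝ)+1) * r^n) = fun n : ℕ => (n:ℝ)*r^n + r^n from
      funext fun n => by ring, Summable.tsum_add hsum_nr hsum_r,
      tsum_coe_mul_geometric_of_norm_lt_one hr, tsum_geometric_of_norm_lt_one hr]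
    rw [inv_eq_one_div]
  rw [hfdef] at hsplit
  rw [hsplit, ← hfdef, hv1, hv2]
  -- final algebraic identity in u = exp(x/3)
  set u := Real.exp (x/3) with hudef
  have hu0 : 0 < u := Real.exp_pos _
  have hq_u : q = (u^6)⁻¹ := by
    rw [hqdef, hudef, ← Real.exp_nat_mul, ← Real.exp_neg]
    congr 1
    push_cast
    ring
  have h23 : Real.exp (2*x/3) = u^2 := by
    rw [hudef, ← Real.exp_nat_mul]; congr 1; push_cast; ring
  have h83 : Real.exp (-(8*x/3)) = (u^8)⁻¹ := by
    rw [hudef, ← Real.exp_nat_mul, ← Real.exp_neg]; congr 1; push_cast; ring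
  have hx3 : Real.exp x = u^3 := by
    rw [hudef, ← Real.exp_nat_mul]; congr 1; push_cast; ring
  have hsinh : Real.sinh (2/3*x) = (u^2 - (u^2)⁻¹)/2 := by
    rw [Real.sinh_eq, show (2/3*x) = 2*x/3 by ring, h23, ← h23, ← Real.exp_neg, h23]
  have hcosh : Real.cosh x = (u^3 + (u^3)⁻¹)/2 := by
    rw [Real.cosh_eq, hx3, ← hx3, ← Real.exp_neg, hx3]
  rw [hsinh, hcosh, h23, h83, hrdef, hq_u,
    show (1:ℝ) - -(u^6)⁻¹ = 1 + (u^6)⁻¹ from by ring]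
  have hu6 : (1:ℝ) + (u^6)⁻¹ ≠ 0 := by positivity
  field_simp
  ring

end LaplaceThetaAux

open Set in
/-- For every `s > 0`:
`∫₀^∞ e^{−st} (2/√(πt)) Σ_{k∈ℤ} k (−1)^{k−1} e^{−(k − 1/3)²/t} dt
  = sinh((2/3)√s) / (√s cosh²(√s))`. -/
theorem laplace_theta_sum (s : ℝ) (hs : 0 < s) :
    ∫ t in Set.Ioi (0 : ℝ),
        Real.exp (-s * t) * (2 / Real.sqrt (π * t)) *
          ∑' k : ℤ, (k : ℝ) * (-1 : ℝ) ^ (k - 1) * Real.exp (-((k : ℝ) - 1 / 3) ^ 2 / t) =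
      Real.sinh (2 / 3 * Real.sqrt s) / (Real.sqrt s * Real.cosh (Real.sqrt s) ^ 2) := by
  have hx : 0 < Real.sqrt s := Real.sqrt_pos.mpr hs
  set F : ℤ → ℝ → ℝ := fun k t => ((k:ℝ) * (-1:ℝ)^(k-1)) *
    (Real.exp (-s*t) * (2 / Real.sqrt (π * t)) * Real.exp (-(|(k:ℝ)-1/3|)^2/t)) with hFdef
  -- rewrite integrand as a tsum
  have hbody : EqOn (fun t : ℝ => Real.exp (-s * t) * (2 / Real.sqrt (π * t)) *
        ∑' k : ℤ, (k : ℝ) * (-1 : ℝ) ^ (k - 1) * Real.exp (-((k : ℝ) - 1 / 3) ^ 2 / t))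
      (fun t : ℝ => ∑' k : ℤ, F k t) (Ioi 0) := by
    intro t _
    simp only [hFdef]
    rw [← tsum_mul_left]
    congr 1
    funext k
    rw [show (|(k:ℝ)-1/3|)^2 = ((k:ℝ)-1/3)^2 from sq_abs _]
    ring
  rw [setIntegral_congr_fun measurableSet_Ioi hbody]
  -- measurability of each term
  have hheatcont : ∀ a : ℝ, ContinuousOn (fun t : ℝ =>
      Real.exp (-s*t) * (2 / Real.sqrt (π * t)) * Real.exp (-a^2/t)) (Ioi 0) := by
    intro a
    apply ContinuousOn.mul
    apply ContinuousOn.mul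
    · exact (Real.continuous_exp.comp (continuous_const.mul continuous_id)).continuousOn
    · exact continuousOn_const.div
        ((Real.continuous_sqrt.comp (continuous_const.mul continuous_id)).continuousOn)
        (fun t ht => ne_of_gt (Real.sqrt_pos.mpr (mul_pos pi_pos ht)))
    · exact Real.continuous_exp.comp_continuousOn
        (continuousOn_const.div continuousOn_id (fun t ht => ne_of_gt ht))
  have hmeas : ∀ k : ℤ, AEStronglyMeasurable (F k) (volume.restrict (Ioi 0)) := by
    intro k
    exact ((continuousOn_const.mul (hheatcont _)).aestronglyMeasurable measurableSet_Ioi)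
  -- integrability of each term
  have hFint : ∀ k : ℤ, IntegrableOn (F k) (Ioi 0) := by
    intro k
    exact (laplace_heat_integrable hs (abs_k_third_pos k)).const_mul _
  -- norm of coefficient
  have habs_coeff : ∀ k : ℤ, |(k:ℝ) * (-1:ℝ)^(k-1)| = |(k:ℝ)| := by
    intro k
    have h1 : |(-1:ℝ)^(k-1)| = 1 := by
      rcases Int.even_or_odd (k-1) with he | ho
      · rw [he.neg_one_zpow, abs_one]
      · rw [ho.neg_one_zpow, abs_neg, abs_one]
    rw [abs_mul, h1, mul_one]
  -- value of each integral
  have hFval : ∀ k : ℤ, ∫ t in Ioi (0:ℝ), F k t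
      = ((k:ℝ) * (-1:ℝ)^(k-1)) * ((2/Real.sqrt s) * Real.exp (-(2*|(k:ℝ)-1/3| * Real.sqrt s))) := by
    intro k
    rw [hFdef]
    simp only
    rw [integral_const_mul, laplace_heat_integral hs (abs_k_third_pos k)]
  -- the lintegral bound
  have hlint : ∀ k : ℤ, ∫⁻ t, ‖F k t‖₊ ∂(volume.restrict (Ioi 0))
      = ENNReal.ofReal (|(k:ℝ)| * ((2/Real.sqrt s) * Real.exp (-(2*|(k:ℝ)-1/3| * Real.sqrt s)))) := by
    intro k
    erw [← ofReal_integral_norm_eq_lintegral_enorm (hFint k)]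
    congr 1
    have : ∫ t in Ioi (0:ℝ), ‖F k t‖
        = ∫ t in Ioi (0:ℝ), |(k:ℝ)| * (Real.exp (-s*t) * (2 / Real.sqrt (π * t)) *
            Real.exp (-(|(k:ℝ)-1/3|)^2/t)) := by
      apply setIntegral_congr_fun measurableSet_Ioi
      intro t ht
      simp only [mem_Ioi] at ht
      have h1 : 0 < Real.sqrt (π * t) := Real.sqrt_pos.mpr (mul_pos pi_pos ht)
      simp only [hFdef, Real.norm_eq_abs]
      rw [abs_mul, habs_coeff k, abs_of_nonneg (show (0:ℝ) ≤ Real.exp (-s*t) *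
        (2 / Real.sqrt (π * t)) * Real.exp (-(|(k:ℝ)-1/3|)^2/t) by positivity)]
    rw [this, integral_const_mul, laplace_heat_integral hs (abs_k_third_pos k)]
  -- summability
  have hG := G_summable hx (2/Real.sqrt s) (by positivity)
  have hne : ∑' k : ℤ, ∫⁻ t, ‖F k t‖₊ ∂(volume.restrict (Ioi 0)) ≠ ⊤ := by
    rw [show (fun k : ℤ => ∫⁻ t, ‖F k t‖₊ ∂(volume.restrict (Ioi 0)))
        = fun k : ℤ => ENNReal.ofReal (|(k:ℝ)| * ((2/Real.sqrt s) *
          Real.exp (-(2*|(k:ℝ)-1/3| * Real.sqrt s)))) from funext hlint]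
    rw [← ENNReal.ofReal_tsum_of_nonneg (fun k => by positivity) hG]
    exact ENNReal.ofReal_ne_top
  rw [integral_tsum hmeas hne]
  rw [show (fun k : ℤ => ∫ t in Ioi (0:ℝ), F k t)
      = fun k : ℤ => ((k:ℝ) * (-1:ℝ)^(k-1)) * ((2/Real.sqrt s) *
        Real.exp (-(2*|(k:ℝ)-1/3| * Real.sqrt s))) from funext hFval]
  exact series_value hx
end
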